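/- arXiv:1606.03651 — 2 statements merged into one kernel-verified Lean document; each statement's English description precedes it below -/
import Mathlib

section
/- Let X be a real-valued random variable with unbounded distribution F and Y a nonnegative random variable with distribution G, neither degenerate at zero, and let H be the distribution of XY. If (X,Y) satisfies Assumption 1 (there is a measurable function h:[0,∞)→(0,∞) such that P(X>x | Y=y) ~ h(y)P(X>x) as x→∞ uniformly in y≥0) and Assumption 2 (Ḡ(bx)=o(H̄(x)) as x→∞ for every constant b>0), then P(XY>x) ~ ∫_0^∞ h(y) F̄(x/y) G(dy) as x→∞. -/
open MeasureTheory ProbabilityTheory Filter Set Asymptotics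

noncomputable section

/-- The tail (survival) function `x ↦ P(Z > x)` of a random variable `Z`. -/
def rvTail {Ω : Type*} [MeasureSpace Ω] (Z : Ω → ℝ) (x : ℝ) : ℝ :=
  (ℙ {ω | x < Z ω}).toReal

/-- The cumulative distribution function `x ↦ P(Z ≤ x)` of a random variable `Z`. -/
def rvCdf {Ω : Type*} [MeasureSpace Ω] (Z : Ω → ℝ) (x : ℝ) : ℝ :=
  (ℙ {ω | Z ω ≤ x}).toReal

/-- The left limit of the cdf, `G(y-) = P(Z < y)`. -/
def rvCdfLeft {Ω : Type*} [MeasureSpace Ω] (Z : Ω → ℝ) (y : ℝ) : ℝ :=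
  (ℙ {ω | Z ω < y}).toReal

/-- The distribution of `Z` is unbounded (above): its tail is positive for every `x > 0`. -/
def UnboundedDist {Ω : Type*} [MeasureSpace Ω] (Z : Ω → ℝ) : Prop :=
  ∀ x > 0, 0 < rvTail Z x

/-- The support `D_Z = {y : P(Z ∈ (y - δ, y + δ)) > 0 for all δ > 0}` of the
distribution of `Z`. -/
def distSupport {Ω : Type*} [MeasureSpace Ω] (Z : Ω → ℝ) : Set ℝ :=
  {y | ∀ δ > 0, 0 < ℙ {ω | Z ω ∈ Ioo (y - δ) (y + δ)}}

/-- The distribution of `Z` belongs to the class `L(γ)`: it is unbounded above and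
`P(Z > x - t) ~ e^{γ t} P(Z > x)` as `x → ∞`, for every `t > 0`. -/
def MemLGamma {Ω : Type*} [MeasureSpace Ω] (Z : Ω → ℝ) (γ : ℝ) : Prop :=
  UnboundedDist Z ∧
    ∀ t > 0, (fun x => rvTail Z (x - t)) ~[atTop] (fun x => Real.exp (γ * t) * rvTail Z x)

/-- The tail of the two-fold convolution of the distribution of `Z` with itself. -/
def convSqTail {Ω : Type*} [MeasureSpace Ω] (Z : Ω → ℝ) (x : ℝ) : ℝ :=
  (((Measure.map Z ℙ).conv (Measure.map Z ℙ)) (Ioi x)).toReal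

/-- The distribution of `Z` belongs to the class `S(γ)`: it belongs to `L(γ)`, the
exponential moment `c = ∫ e^{γ y} dV(y)` is finite, and the tail of the two-fold
convolution satisfies `V̄*²(x) ~ 2 c V̄(x)` as `x → ∞`. -/
def MemSGamma {Ω : Type*} [MeasureSpace Ω] (Z : Ω → ℝ) (γ : ℝ) : Prop :=
  MemLGamma Z γ ∧
    Integrable (fun y => Real.exp (γ * y)) (Measure.map Z ℙ) ∧
    (fun x => convSqTail Z x) ~[atTop]
      (fun x => 2 * (∫ y, Real.exp (γ * y) ∂(Measure.map Z ℙ)) * rvTail Z x)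

open Classical in
/-- `γ / β_G`, where `β_G = sup {y : G(y) < 1}` is the right endpoint of the distribution
of `Z`, with the convention that `γ / β_G = 0` when `β_G = ∞`.
(Note that `G(y) < 1 ↔ P(Z > y) > 0`.) -/
def gammaOverBeta {Ω : Type*} [MeasureSpace Ω] (Z : Ω → ℝ) (γ : ℝ) : ℝ :=
  if BddAbove {y : ℝ | 0 < rvTail Z y} then γ / sSup {y : ℝ | 0 < rvTail Z y} else 0

/-- Assumption 2: `Ḡ(b x) = o(H̄(x))` as `x → ∞` for every constant `b > 0`, where `G` is
the distribution of `Y` and `H` is the distribution of the product `X Y`. -/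
def Assumption2 {Ω : Type*} [MeasureSpace Ω] (X Y : Ω → ℝ) : Prop :=
  ∀ b > 0, (fun x => rvTail Y (b * x)) =o[atTop] fun x => rvTail (fun ω => X ω * Y ω) x

/-- Assumption 1: `K x y` is the conditional probability `P(X > x | Y = y)`, namely for
`y` in the support of `Y` it is the limit of `P(X > x | Y ∈ (y - δ, y + δ])` as `δ → 0+`,
and for `y` outside the support it is the unconditional probability `P(X > x)` (and then
`h y = 1`); `h : [0,∞) → (0,∞)` is a measurable function such that
`P(X > x | Y = y) ~ h(y) P(X > x)` as `x → ∞`, uniformly for `y ≥ 0`. -/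
def Assumption1 {Ω : Type*} [MeasureSpace Ω] (X Y : Ω → ℝ) (h : ℝ → ℝ) (K : ℝ → ℝ → ℝ) :
    Prop :=
  Measurable h ∧ (∀ y, 0 ≤ y → 0 < h y) ∧
    (∀ y, y ∉ distSupport Y → h y = 1 ∧ ∀ x, K x y = rvTail X x) ∧
    (∀ y ∈ distSupport Y, ∀ x : ℝ,
      Tendsto
        (fun δ : ℝ => (ℙ {ω | x < X ω ∧ Y ω ∈ Ioc (y - δ) (y + δ)}).toReal /
          (ℙ {ω | Y ω ∈ Ioc (y - δ) (y + δ)}).toReal)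
        (nhdsWithin 0 (Ioi 0)) (nhds (K x y))) ∧
    ∀ ε > 0, ∀ᶠ x in atTop, ∀ y, 0 ≤ y → |K x y / (h y * rvTail X x) - 1| < ε

/-- `(X, Y)` follows a Farlie–Gumbel–Morgenstern (FGM) distribution with parameter
`θ ∈ [-1, 1]`: `P(X > x, Y > y) = F̄(x) Ḡ(y) (1 + θ F(x) G(y))` for all `x` in the
support of `X` and `y` in the support of `Y`. -/
def FGM {Ω : Type*} [MeasureSpace Ω] (X Y : Ω → ℝ) (θ : ℝ) : Prop :=
  θ ∈ Icc (-1 : ℝ) 1 ∧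
    ∀ x ∈ distSupport X, ∀ y ∈ distSupport Y,
      (ℙ {ω | x < X ω ∧ y < Y ω}).toReal =
        rvTail X x * rvTail Y y * (1 + θ * rvCdf X x * rvCdf Y y)

/-- `(X, Y)` follows a bivariate Sarmanov distribution with kernels `φ₁, φ₂` and
parameter `θ`: the joint law has density `1 + θ φ₁(x) φ₂(y)` with respect to the product
of the marginal laws, where `φ₁, φ₂` are measurable, `E φ₁(X) = E φ₂(Y) = 0` and
`1 + θ φ₁(x) φ₂(y) ≥ 0`. -/
def Sarmanov {Ω : Type*} [MeasureSpace Ω] (X Y : Ω → ℝ) (φ₁ φ₂ : ℝ → ℝ) (θ : ℝ) : Prop :=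
  Measurable φ₁ ∧ Measurable φ₂ ∧
    Integrable (fun ω => φ₁ (X ω)) ℙ ∧ Integrable (fun ω => φ₂ (Y ω)) ℙ ∧
    (∫ ω, φ₁ (X ω)) = 0 ∧ (∫ ω, φ₂ (Y ω)) = 0 ∧
    (∀ x y : ℝ, 0 ≤ y → 0 ≤ 1 + θ * φ₁ x * φ₂ y) ∧
    Measure.map (fun ω => (X ω, Y ω)) ℙ =
      ((Measure.map X ℙ).prod (Measure.map Y ℙ)).withDensity
        (fun p => ENNReal.ofReal (1 + θ * φ₁ p.1 * φ₂ p.2))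

/-- The condition `ψ(y) = lim_{δ → 0+} (∫_{y-δ}^{y+δ} φ₂(v) G(dv)) / (G(y+δ) - G(y-δ))`
for all `y` in the support of `Y`. -/
def SarmanovPsi {Ω : Type*} [MeasureSpace Ω] (Y : Ω → ℝ) (φ₂ ψ : ℝ → ℝ) : Prop :=
  ∀ y ∈ distSupport Y,
    Tendsto
      (fun δ : ℝ => (∫ v in Ioc (y - δ) (y + δ), φ₂ v ∂(Measure.map Y ℙ)) /
        (rvCdf Y (y + δ) - rvCdf Y (y - δ)))
      (nhdsWithin 0 (Ioi 0)) (nhds (ψ y))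


open scoped ENNReal

/-! ### Auxiliary lemmas -/

lemma aux_countable_atoms (G : Measure ℝ) [IsFiniteMeasure G] :
    Set.Countable {a : ℝ | 0 < G {a}} :=
  MeasureTheory.Measure.countable_meas_pos_of_disjoint_iUnion₀ (μ := G)
    (As := fun a : ℝ => {a})
    (fun i => (measurableSet_singleton i).nullMeasurableSet)
    (fun _ _ hij => (Set.disjoint_singleton.mpr hij).aedisjoint)

lemma aux_measure_Icc_eq_Ioc {G : Measure ℝ} {a b : ℝ} (hab : a ≤ b) (ha : G {a} = 0) :
    G (Icc a b) = G (Ioc a b) := by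
  rw [← Set.Ioc_insert_left hab, Set.insert_eq]
  refine le_antisymm ?_ (measure_mono Set.subset_union_right)
  calc G ({a} ∪ Ioc a b) ≤ G {a} + G (Ioc a b) := measure_union_le _ _
  _ = G (Ioc a b) := by rw [ha, zero_add]

/-- Differentiation lemma: the assumed `Ioc`-ratio limit identifies the density. -/
lemma aux_diff_lemma (G ρ' : Measure ℝ) [IsFiniteMeasure G] [IsFiniteMeasure ρ'] (hle : ρ' ≤ G)
    (g : ℝ → ℝ≥0∞) (hg : Measurable g)
    (hgρ : ∀ S : Set ℝ, MeasurableSet S → ∫⁻ y in S, g y ∂G = ρ' S)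
    (D : Set ℝ) (k : ℝ → ℝ)
    (hk : ∀ y ∈ D, Tendsto (fun δ : ℝ =>
      (ρ' (Ioc (y - δ) (y + δ))).toReal / (G (Ioc (y - δ) (y + δ))).toReal)
      (nhdsWithin 0 (Ioi 0)) (nhds (k y))) :
    ∀ᵐ y ∂G, y ∈ D → (g y).toReal = k y := by
  have hac : ρ' ≪ G := hle.absolutelyContinuous
  have h1 := Besicovitch.ae_tendsto_rnDeriv ρ' G
  have h2 : g =ᵐ[G] ρ'.rnDeriv G := by
    refine ae_eq_of_forall_setLIntegral_eq_of_sigmaFinite hg (ρ'.measurable_rnDeriv G) ?_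
    intro s hs _
    rw [hgρ s hs, Measure.setLIntegral_rnDeriv hac s]
  have h3 := Measure.rnDeriv_lt_top ρ' G
  have hatoms := aux_countable_atoms G
  filter_upwards [h1, h2, h3] with y hy1 hy2 hy3 hyD
  have hδ : ∀ n : ℕ, ∃ δ : ℝ, δ ∈ Ioo (0:ℝ) (1/(n+1)) ∧ G {y - δ} = 0 := by
    intro n
    by_contra hcon
    push_neg at hcon
    have hsub : Ioo (0:ℝ) (1/(n+1)) ⊆ (fun a => y - a) '' {a : ℝ | 0 < G {a}} := by
      intro δ hδ
      have := hcon δ hδ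
      exact ⟨y - δ, by simpa [pos_iff_ne_zero] using this, by ring⟩
    have h0 : (volume (Ioo (0:ℝ) (1/(n+1)))) = 0 :=
      measure_mono_null hsub ((hatoms.image _).measure_zero _)
    rw [Real.volume_Ioo] at h0
    simp only [sub_zero] at h0
    have : (0:ℝ) < 1/(n+1) := by positivity
    simp [ENNReal.ofReal_eq_zero, not_lt.mpr this.le] at h0
    linarith
  choose δs hδs1 hδs2 using hδ
  have hδpos : ∀ n, 0 < δs n := fun n => (hδs1 n).1
  have hδtend : Tendsto δs atTop (nhdsWithin 0 (Ioi 0)) := by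
    refine tendsto_nhdsWithin_iff.mpr ⟨?_, Eventually.of_forall hδpos⟩
    have hub : Tendsto (fun n : ℕ => 1/((n:ℝ)+1)) atTop (nhds 0) :=
      tendsto_one_div_add_atTop_nhds_zero_nat
    exact squeeze_zero (fun n => (hδpos n).le) (fun n => (hδs1 n).2.le) hub
  have key : ∀ n, ρ' (Metric.closedBall y (δs n)) / G (Metric.closedBall y (δs n))
      = ρ' (Ioc (y - δs n) (y + δs n)) / G (Ioc (y - δs n) (y + δs n)) := by
    intro n
    have hab : y - δs n ≤ y + δs n := by linarith [hδpos n]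
    have hρ0 : ρ' {y - δs n} = 0 :=
      le_antisymm ((Measure.le_iff'.mp hle _).trans (hδs2 n).le) (zero_le ..)
    rw [Real.closedBall_eq_Icc, aux_measure_Icc_eq_Ioc hab (hδs2 n),
      aux_measure_Icc_eq_Ioc hab hρ0]
  have s1 : Tendsto (fun n => ρ' (Ioc (y - δs n) (y + δs n)) / G (Ioc (y - δs n) (y + δs n)))
      atTop (nhds (ρ'.rnDeriv G y)) :=
    Tendsto.congr (fun n => key n) (hy1.comp hδtend)
  have s1' : Tendsto (fun n => (ρ' (Ioc (y - δs n) (y + δs n))).toReal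
      / (G (Ioc (y - δs n) (y + δs n))).toReal) atTop (nhds ((ρ'.rnDeriv G y).toReal)) := by
    have := (ENNReal.tendsto_toReal hy3.ne).comp s1
    refine Tendsto.congr (fun n => ?_) this
    simp [Function.comp, ENNReal.toReal_div]
  have s2 : Tendsto (fun n => (ρ' (Ioc (y - δs n) (y + δs n))).toReal
      / (G (Ioc (y - δs n) (y + δs n))).toReal) atTop (nhds (k y)) :=
    (hk y hyD).comp hδtend
  rw [hy2]
  exact tendsto_nhds_unique s1' s2

lemma aux_supp_conull {Ω : Type*} [MeasureSpace Ω] (Y : Ω → ℝ) (hY : Measurable Y) :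
    Measure.map Y ℙ (distSupport Y)ᶜ = 0 := by
  set G := Measure.map Y ℙ with hG
  have hGIoo : ∀ a b : ℝ, G (Ioo a b) = ℙ {ω | Y ω ∈ Ioo a b} := fun a b =>
    Measure.map_apply hY measurableSet_Ioo
  set B : Set (ℚ × ℚ) := {pq | G (Ioo (pq.1 : ℝ) (pq.2 : ℝ)) = 0} with hB
  have hcover : (distSupport Y)ᶜ ⊆ ⋃ pq ∈ B, Ioo ((pq.1 : ℚ) : ℝ) ((pq.2 : ℚ) : ℝ) := by
    intro y hy
    simp only [distSupport, mem_compl_iff, mem_setOf_eq, not_forall] at hy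
    obtain ⟨δ, hδ, hzero⟩ := hy
    rw [not_lt, le_zero_iff] at hzero
    obtain ⟨p, hp1, hp2⟩ := exists_rat_btwn (show y - δ < y by linarith)
    obtain ⟨q, hq1, hq2⟩ := exists_rat_btwn (show y < y + δ by linarith)
    refine mem_biUnion (show (p, q) ∈ B from ?_) ⟨hp2, hq1⟩
    have hsub : Ioo ((p:ℝ)) ((q:ℝ)) ⊆ Ioo (y - δ) (y + δ) :=
      Ioo_subset_Ioo hp1.le hq2.le
    have : G (Ioo (p:ℝ) (q:ℝ)) ≤ ℙ {ω | Y ω ∈ Ioo (y - δ) (y + δ)} := by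
      rw [hGIoo]
      exact measure_mono fun ω hω => hsub hω
    simpa [hB] using le_antisymm (this.trans hzero.le) (zero_le ..)
  refine measure_mono_null hcover ?_
  exact (measure_biUnion_null_iff (Set.to_countable B)).mpr fun pq hpq => hpq

lemma aux_tendsto_Ioi (μ : Measure ℝ) [IsFiniteMeasure μ] (x' : ℝ) :
    Tendsto (fun n : ℕ => (μ (Ioi (x' + 1/(n+1)))).toReal) atTop
      (nhds ((μ (Ioi x')).toReal)) := by
  have hmono : Monotone (fun n : ℕ => Ioi (x' + 1/(n+1))) := by
    intro n m hnm
    apply Ioi_subset_Ioi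
    have h1 : (1:ℝ)/(m+1) ≤ 1/(n+1) := by
      apply one_div_le_one_div_of_le (by positivity)
      have : (n:ℝ) ≤ m := Nat.cast_le.mpr hnm
      linarith
    linarith
  have hunion : ⋃ n : ℕ, Ioi (x' + 1/((n:ℝ)+1)) = Ioi x' := by
    ext t
    simp only [mem_iUnion, mem_Ioi]
    constructor
    · rintro ⟨n, hn⟩
      have : (0:ℝ) < 1/(n+1) := by positivity
      linarith
    · intro ht
      obtain ⟨n, hn⟩ := exists_nat_one_div_lt (show (0:ℝ) < t - x' by linarith)
      exact ⟨n, by linarith⟩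
  have := tendsto_measure_iUnion_atTop (μ := μ) hmono
  rw [hunion] at this
  exact (ENNReal.tendsto_toReal (measure_ne_top μ _)).comp this

lemma aux_antitone_Ioi (μ : Measure ℝ) [IsFiniteMeasure μ] :
    Antitone (fun t => (μ (Ioi t)).toReal) := by
  intro a b hab
  exact ENNReal.toReal_mono (measure_ne_top μ _) (measure_mono (Ioi_subset_Ioi hab))

lemma aux_arith (ε δε C₀ u' v' T1 T2 L R W : ℝ)
    (hδεpos : 0 < δε) (hδεhalf : δε ≤ 1/2) (hδεε : 4*δε ≤ ε) (hC₀pos : 0 < C₀)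
    (hu_eq : u' = T1 + T2) (hv_eq : v' = L + R)
    (hT1le : T1 ≤ (1+δε)*L) (hT1ge : (1-δε)*L ≤ T1)
    (hT2nn : 0 ≤ T2) (hT2le : T2 ≤ W) (hRnn : 0 ≤ R) (hRle : R ≤ C₀*W)
    (hLnn : 0 ≤ L) (hWnn : 0 ≤ W) (hWo : (1+C₀)*W ≤ δε*u')
    (hunn : 0 ≤ u') (hvnn : 0 < v') :
    |u' - v'| ≤ ε * v' := by
  have hLv : L ≤ v' := by linarith
  have hδLv : δε * L ≤ δε * v' := mul_le_mul_of_nonneg_left hLv hδεpos.le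
  have hCW : 0 ≤ C₀ * W := mul_nonneg hC₀pos.le hWnn
  have h2 : u' - v' ≤ δε * v' + δε * u' := by nlinarith
  have h1 : -(u' - v') ≤ δε * v' + δε * u' := by nlinarith
  have hu3 : u' ≤ 3 * v' := by
    nlinarith [mul_le_mul_of_nonneg_right hδεhalf hunn,
      mul_le_mul_of_nonneg_right hδεhalf hvnn.le]
  have hδu : δε * u' ≤ δε * (3 * v') := mul_le_mul_of_nonneg_left hu3 hδεpos.le
  have hεv : 4 * δε * v' ≤ ε * v' := mul_le_mul_of_nonneg_right hδεε hvnn.le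
  rw [abs_le]
  constructor <;> nlinarith

theorem product_tail_asymp_of_assumption1 {Ω : Type*} [MeasureSpace Ω] [IsProbabilityMeasure (ℙ : Measure Ω)]
    (X Y : Ω → ℝ) (hXm : Measurable X) (hYm : Measurable Y)
    (hYnonneg : ∀ ω, 0 ≤ Y ω)
    (hFunb : UnboundedDist X)
    (hXnd : ℙ {ω | X ω = 0} ≠ 1) (hYnd : ℙ {ω | Y ω = 0} ≠ 1)
    (h : ℝ → ℝ) (K : ℝ → ℝ → ℝ) (hA1 : Assumption1 X Y h K) (hA2 : Assumption2 X Y) :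
    (fun x => rvTail (fun ω => X ω * Y ω) x) ~[atTop]
      (fun x => ∫ y in Ioi (0 : ℝ), h y * rvTail X (x / y) ∂(Measure.map Y ℙ)) := by
  obtain ⟨hhm, hhpos, hout, hlimit, hunif⟩ := hA1
  set G : Measure ℝ := Measure.map Y ℙ with hGdef
  haveI hGprob : IsProbabilityMeasure G := Measure.isProbabilityMeasure_map hYm.aemeasurable
  have hYXm : Measurable (fun ω => (Y ω, X ω)) := hYm.prodMk hXm
  set ρ : Measure (ℝ × ℝ) := Measure.map (fun ω => (Y ω, X ω)) ℙ with hρdef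
  haveI hρprob : IsProbabilityMeasure ρ := Measure.isProbabilityMeasure_map hYXm.aemeasurable
  set κ := ρ.condKernel with hκdef
  haveI hκM : IsMarkovKernel κ := by rw [hκdef]; infer_instance
  haveI hFXprob : IsProbabilityMeasure (Measure.map X ℙ) :=
    Measure.isProbabilityMeasure_map hXm.aemeasurable
  have hfst : ρ.fst = G := Measure.fst_map_prodMk (X := Y) (Y := X) hXm
  have hdis : G ⊗ₘ κ = ρ := by rw [← hfst]; exact ρ.disintegrate _
  -- basic facts about rvTail X
  have hFX : ∀ t : ℝ, rvTail X t = ((Measure.map X ℙ) (Ioi t)).toReal := by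
    intro t
    rw [rvTail, Measure.map_apply hXm measurableSet_Ioi]
    rfl
  have hFanti : Antitone (rvTail X) := by
    intro a b hab
    rw [hFX a, hFX b]
    exact aux_antitone_Ioi _ hab
  have hFnonneg : ∀ t, 0 ≤ rvTail X t := fun t => ENNReal.toReal_nonneg
  have hFle1 : ∀ t, rvTail X t ≤ 1 := by
    intro t
    rw [rvTail]
    exact ENNReal.toReal_le_of_le_ofReal zero_le_one (by simpa using prob_le_one)
  -- K is between 0 and 1
  have hK01 : ∀ x' y : ℝ, 0 ≤ K x' y ∧ K x' y ≤ 1 := by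
    intro x' y
    by_cases hy : y ∈ distSupport Y
    · have hlim := hlimit y hy x'
      constructor
      · refine ge_of_tendsto hlim (Eventually.of_forall fun δ => ?_)
        positivity
      · refine le_of_tendsto hlim (Eventually.of_forall fun δ => ?_)
        refine div_le_one_of_le₀ ?_ ENNReal.toReal_nonneg
        refine ENNReal.toReal_mono (measure_ne_top _ _) (measure_mono ?_)
        exact fun ω hω => hω.2
    · rw [(hout y hy).2 x']
      exact ⟨hFnonneg x', hFle1 x'⟩
  -- global bound on h
  obtain ⟨M₀, hM₀⟩ := eventually_atTop.mp (hunif (1/2) (by norm_num))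
  set x₀ : ℝ := max M₀ 1 with hx₀def
  have hx₀pos : (0:ℝ) < x₀ := lt_of_lt_of_le one_pos (le_max_right _ _)
  have hF₀pos : 0 < rvTail X x₀ := hFunb x₀ hx₀pos
  set C₀ : ℝ := 2 / rvTail X x₀ with hC₀def
  have hC₀pos : 0 < C₀ := by positivity
  have hC₀ : ∀ y, 0 ≤ y → h y ≤ C₀ := by
    intro y hy
    have hb := hM₀ x₀ (le_max_left _ _) y hy
    have hhy := hhpos y hy
    have hK1 := (hK01 x₀ y).2
    rw [abs_lt] at hb
    have hprod : 0 < h y * rvTail X x₀ := by positivity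
    have h1 : (1:ℝ)/2 < K x₀ y / (h y * rvTail X x₀) := by linarith [hb.1]
    rw [lt_div_iff₀ hprod] at h1
    rw [hC₀def, le_div_iff₀ hF₀pos]
    nlinarith
  -- a.e. facts about G
  have hae_nonneg : ∀ᵐ y ∂G, 0 ≤ y := by
    have hs : MeasurableSet {t : ℝ | 0 ≤ t} := measurableSet_Ici
    rw [hGdef, ae_map_iff hYm.aemeasurable hs]
    exact Eventually.of_forall hYnonneg
  have hae_supp : ∀ᵐ y ∂G, y ∈ distSupport Y := by
    have := aux_supp_conull Y hYm
    rw [← hGdef] at this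
    exact ae_iff.mpr this
  -- the conditional measure identification, for each fixed threshold
  have haeq : ∀ x' : ℝ, ∀ᵐ y ∂G, y ∈ distSupport Y → (κ y (Ioi x')).toReal = K x' y := by
    intro x'
    set ρq : Measure ℝ := Measure.map Y (Measure.restrict ℙ {ω | x' < X ω}) with hρqdef
    haveI : IsFiniteMeasure (Measure.restrict ℙ {ω | x' < X ω}) := inferInstance
    haveI : IsFiniteMeasure ρq := by
      rw [hρqdef]; infer_instance
    have hρqle : ρq ≤ G := by
      rw [hρqdef, hGdef]
      exact Measure.map_mono Measure.restrict_le_self hYm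
    have hρq_apply : ∀ S : Set ℝ, MeasurableSet S →
        ρq S = ℙ {ω | x' < X ω ∧ Y ω ∈ S} := by
      intro S hS
      rw [hρqdef, Measure.map_apply hYm hS,
        Measure.restrict_apply (hYm hS)]
      congr 1
      ext ω
      simp only [mem_inter_iff, mem_preimage, mem_setOf_eq]
      exact and_comm
    have hgρ : ∀ S : Set ℝ, MeasurableSet S → ∫⁻ y in S, κ y (Ioi x') ∂G = ρq S := by
      intro S hS
      rw [← Measure.compProd_apply_prod hS measurableSet_Ioi, hdis, hρdef,
        Measure.map_apply hYXm (hS.prod measurableSet_Ioi),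
        hρq_apply S hS]
      congr 1
      ext ω
      simp only [mem_preimage, mem_prod, mem_setOf_eq, mem_Ioi]
      exact and_comm
    have hk : ∀ y ∈ distSupport Y, Tendsto (fun δ : ℝ =>
        (ρq (Ioc (y - δ) (y + δ))).toReal / (G (Ioc (y - δ) (y + δ))).toReal)
        (nhdsWithin 0 (Ioi 0)) (nhds (K x' y)) := by
      intro y hy
      refine Tendsto.congr (fun δ => ?_) (hlimit y hy x')
      rw [hρq_apply _ measurableSet_Ioc, hGdef,
        Measure.map_apply hYm measurableSet_Ioc]
      rfl
    exact aux_diff_lemma G ρq hρqle (fun y => κ y (Ioi x'))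
      (Kernel.measurable_coe κ measurableSet_Ioi) hgρ (distSupport Y) (K x') hk
  -- the disintegration identity for the tail of the product
  have hkernm : ∀ x : ℝ, Measurable (fun y => κ y {u : ℝ | x < u * y}) := by
    intro x
    have hS : MeasurableSet {p : ℝ × ℝ | x < p.2 * p.1} :=
      measurableSet_lt measurable_const (measurable_snd.mul measurable_fst)
    exact Kernel.measurable_kernel_prodMk_left hS
  have hu_id : ∀ x : ℝ, 0 < x → rvTail (fun ω => X ω * Y ω) x
      = ∫ y in Ioi (0:ℝ), (κ y {u : ℝ | x < u * y}).toReal ∂G := by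
    intro x hx
    have hS : MeasurableSet {p : ℝ × ℝ | x < p.2 * p.1} :=
      measurableSet_lt measurable_const (measurable_snd.mul measurable_fst)
    have e1 : ℙ {ω | x < X ω * Y ω} = ρ {p : ℝ × ℝ | x < p.2 * p.1} := by
      rw [hρdef, Measure.map_apply hYXm hS]
      rfl
    have e2 : ρ {p : ℝ × ℝ | x < p.2 * p.1} = ∫⁻ y, κ y {u : ℝ | x < u * y} ∂G := by
      rw [← hdis, Measure.compProd_apply hS]
      rfl
    have e3 : ∫⁻ y, κ y {u : ℝ | x < u * y} ∂G
        = ∫⁻ y in Ioi (0:ℝ), κ y {u : ℝ | x < u * y} ∂G := by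
      rw [← lintegral_add_compl (fun y => κ y {u : ℝ | x < u * y}) measurableSet_Ioi]
      have hzero : ∫⁻ y in (Ioi (0:ℝ))ᶜ, κ y {u : ℝ | x < u * y} ∂G = 0 := by
        have hae : ∀ᵐ y ∂(G.restrict (Ioi (0:ℝ))ᶜ), κ y {u : ℝ | x < u * y} = 0 := by
          filter_upwards [ae_restrict_of_ae hae_nonneg,
            ae_restrict_mem measurableSet_Ioi.compl] with y hy0 hyc
          have hy : y = 0 := le_antisymm (by simpa using hyc) hy0
          subst hy
          have : {u : ℝ | x < u * 0} = (∅ : Set ℝ) := by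
            ext u; simp [hx.not_gt]
          rw [this]
          simp
        rw [lintegral_congr_ae hae]
        simp
      rw [hzero, add_zero]
    have hlttop : ∀ᵐ y ∂(G.restrict (Ioi (0:ℝ))), κ y {u : ℝ | x < u * y} < ⊤ :=
      Eventually.of_forall fun y => lt_of_le_of_lt prob_le_one ENNReal.one_lt_top
    rw [rvTail, e1, e2, e3, ← integral_toReal ((hkernm x).aemeasurable.restrict) hlttop]
  -- the uniform sandwich, transferred to the conditional kernel
  have hsand : ∀ δε M : ℝ, 0 < δε → 1 ≤ M →
      (∀ x' : ℝ, x' ≥ M → ∀ y, 0 ≤ y → |K x' y / (h y * rvTail X x') - 1| < δε) →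
      ∀ᵐ y ∂G, ∀ x' : ℝ, M ≤ x' →
        (1 - δε) * (h y * rvTail X x') ≤ (κ y (Ioi x')).toReal ∧
        (κ y (Ioi x')).toReal ≤ (1 + δε) * (h y * rvTail X x') := by
    intro δε M hδε hM1 hM
    have hrat : ∀ᵐ y ∂G, ∀ q : ℚ, y ∈ distSupport Y → (κ y (Ioi (q:ℝ))).toReal = K (q:ℝ) y :=
      ae_all_iff.mpr fun q => haeq (q:ℝ)
    filter_upwards [hrat, hae_supp, hae_nonneg] with y hyq hyD hy0 x' hx'
    have hqb : ∀ q : ℚ, M ≤ (q:ℝ) →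
        (1 - δε) * (h y * rvTail X (q:ℝ)) ≤ (κ y (Ioi (q:ℝ))).toReal ∧
        (κ y (Ioi (q:ℝ))).toReal ≤ (1 + δε) * (h y * rvTail X (q:ℝ)) := by
      intro q hq
      have hFq : 0 < rvTail X (q:ℝ) :=
        hFunb _ (lt_of_lt_of_le one_pos (le_trans hM1 hq))
      have hhy := hhpos y hy0
      have hb := hM (q:ℝ) hq y hy0
      rw [abs_lt] at hb
      have hprod : 0 < h y * rvTail X (q:ℝ) := by positivity
      rw [hyq q hyD]
      constructor
      · have h1 : (1 - δε) < K (q:ℝ) y / (h y * rvTail X (q:ℝ)) := by linarith [hb.1]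
        rw [lt_div_iff₀ hprod] at h1
        linarith
      · have h2 : K (q:ℝ) y / (h y * rvTail X (q:ℝ)) < 1 + δε := by linarith [hb.2]
        rw [div_lt_iff₀ hprod] at h2
        linarith
    have hqex : ∀ n : ℕ, ∃ q : ℚ, x' < (q:ℝ) ∧ (q:ℝ) < x' + 1/((n:ℝ)+1) := by
      intro n
      obtain ⟨q, h1, h2⟩ := exists_rat_btwn (show x' < x' + 1/((n:ℝ)+1) by
        have : (0:ℝ) < 1/((n:ℝ)+1) := by positivity
        linarith)
      exact ⟨q, h1, h2⟩
    choose qs hqs1 hqs2 using hqex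
    haveI : IsProbabilityMeasure (κ y) := inferInstance
    have hFlim : Tendsto (fun n : ℕ => rvTail X ((qs n : ℝ))) atTop (nhds (rvTail X x')) := by
      have hup := aux_tendsto_Ioi (Measure.map X ℙ) x'
      refine tendsto_of_tendsto_of_tendsto_of_le_of_le
        (g := fun n : ℕ => ((Measure.map X ℙ) (Ioi (x' + 1/((n:ℝ)+1)))).toReal)
        (h := fun _ : ℕ => rvTail X x') ?_ tendsto_const_nhds ?_ ?_
      · rw [hFX x']; exact hup
      · intro n
        exact le_trans (le_of_eq (hFX (x' + 1/((n:ℝ)+1))).symm) (hFanti (hqs2 n).le)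
      · intro n
        exact hFanti (hqs1 n).le
    have hκlim : Tendsto (fun n : ℕ => (κ y (Ioi (qs n : ℝ))).toReal) atTop
        (nhds ((κ y (Ioi x')).toReal)) := by
      have hup := aux_tendsto_Ioi (κ y) x'
      refine tendsto_of_tendsto_of_tendsto_of_le_of_le
        (g := fun n : ℕ => ((κ y) (Ioi (x' + 1/((n:ℝ)+1)))).toReal)
        (h := fun _ : ℕ => (κ y (Ioi x')).toReal) hup tendsto_const_nhds ?_ ?_
      · intro n
        exact aux_antitone_Ioi (κ y) (hqs2 n).le
      · intro n
        exact aux_antitone_Ioi (κ y) (hqs1 n).le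
    constructor
    · refine le_of_tendsto_of_tendsto' ((hFlim.const_mul (h y)).const_mul (1 - δε)) hκlim
        fun n => ?_
      exact (hqb (qs n) (le_trans hx' (hqs1 n).le)).1
    · refine le_of_tendsto_of_tendsto' hκlim ((hFlim.const_mul (h y)).const_mul (1 + δε))
        fun n => ?_
      exact (hqb (qs n) (le_trans hx' (hqs1 n).le)).2
  -- measurability and integrability
  have hfk_meas : ∀ x : ℝ, Measurable fun y => (κ y {u : ℝ | x < u * y}).toReal :=
    fun x => (hkernm x).ennreal_toReal
  have hfk_int : ∀ (x : ℝ) (S : Set ℝ),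
      IntegrableOn (fun y => (κ y {u : ℝ | x < u * y}).toReal) S G := by
    intro x S
    refine Integrable.mono' (integrable_const 1) ((hfk_meas x).aestronglyMeasurable.restrict) ?_
    refine Eventually.of_forall fun y => ?_
    rw [Real.norm_eq_abs, abs_of_nonneg ENNReal.toReal_nonneg]
    exact ENNReal.toReal_le_of_le_ofReal zero_le_one (by simpa using prob_le_one)
  have hfH_meas : ∀ x : ℝ, Measurable fun y => h y * rvTail X (x / y) :=
    fun x => hhm.mul (hFanti.measurable.comp (measurable_const.div measurable_id))
  have hfH_int : ∀ (x : ℝ) (S : Set ℝ),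
      IntegrableOn (fun y => h y * rvTail X (x / y)) S G := by
    intro x S
    refine Integrable.mono' (integrable_const C₀) ((hfH_meas x).aestronglyMeasurable.restrict) ?_
    filter_upwards [ae_restrict_of_ae hae_nonneg] with y hy0
    rw [Real.norm_eq_abs, abs_of_nonneg (mul_nonneg (hhpos y hy0).le (hFnonneg _))]
    calc h y * rvTail X (x/y) ≤ C₀ * 1 :=
          mul_le_mul (hC₀ y hy0) (hFle1 _) (hFnonneg _) hC₀pos.le
    _ = C₀ := mul_one _
  -- positivity of the integral
  have hGIoi0 : 0 < G (Ioi (0:ℝ)) := by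
    have hA : MeasurableSet {ω | Y ω = 0} := hYm (measurableSet_singleton 0)
    have h1 : ℙ {ω | Y ω = 0} < 1 := lt_of_le_of_ne prob_le_one hYnd
    have h2 : 0 < ℙ {ω | Y ω = 0}ᶜ := by
      rw [prob_compl_eq_one_sub hA]
      exact tsub_pos_iff_lt.mpr h1
    have hset : Y ⁻¹' Ioi (0:ℝ) = {ω | Y ω = 0}ᶜ := by
      ext ω
      simp only [mem_preimage, mem_Ioi, mem_compl_iff, mem_setOf_eq]
      constructor
      · intro hlt; exact hlt.ne'
      · intro hne; exact lt_of_le_of_ne (hYnonneg ω) (Ne.symm hne)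
    rw [hGdef, Measure.map_apply hYm measurableSet_Ioi, hset]
    exact h2
  have hvpos : ∀ x : ℝ, 0 < x → 0 < ∫ y in Ioi (0:ℝ), h y * rvTail X (x / y) ∂G := by
    intro x hx
    have hnn : 0 ≤ᵐ[G.restrict (Ioi (0:ℝ))] fun y => h y * rvTail X (x / y) := by
      filter_upwards [ae_restrict_of_ae hae_nonneg] with y hy0
      exact mul_nonneg (hhpos y hy0).le (hFnonneg _)
    rw [setIntegral_pos_iff_support_of_nonneg_ae hnn (hfH_int x _)]
    refine lt_of_lt_of_le hGIoi0 (measure_mono ?_)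
    intro y hy
    refine ⟨?_, hy⟩
    have hy0 : 0 < y := hy
    have : 0 < h y * rvTail X (x / y) :=
      mul_pos (hhpos y hy0.le) (hFunb _ (div_pos hx hy0))
    exact Function.mem_support.mpr this.ne'
  -- the core estimate
  have hcore : ∀ ε : ℝ, 0 < ε → ∀ᶠ x in atTop,
      |rvTail (fun ω => X ω * Y ω) x - ∫ y in Ioi (0:ℝ), h y * rvTail X (x / y) ∂G|
        ≤ ε * ∫ y in Ioi (0:ℝ), h y * rvTail X (x / y) ∂G := by
    intro ε hε
    set δε := min (ε/4) (1/2) with hδεdef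
    have hδεpos : 0 < δε := lt_min (by linarith) (by norm_num)
    have hδεhalf : δε ≤ 1/2 := min_le_right _ _
    have hδεε : 4 * δε ≤ ε := by
      have := min_le_left (ε/4) (1/2); rw [hδεdef]; linarith [this]
    obtain ⟨M₁, hM₁⟩ := eventually_atTop.mp (hunif δε hδεpos)
    set M := max M₁ 1 with hMdef
    have hM1 : (1:ℝ) ≤ M := le_max_right _ _
    have hMpos : (0:ℝ) < M := lt_of_lt_of_le one_pos hM1
    have hMb : ∀ x' : ℝ, x' ≥ M → ∀ y, 0 ≤ y → |K x' y / (h y * rvTail X x') - 1| < δε :=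
      fun x' hx' => hM₁ x' (le_trans (le_max_left _ _) hx')
    have haesand := hsand δε M hδεpos hM1 hMb
    have ho := (hA2 M⁻¹ (by positivity)).bound
      (show (0:ℝ) < δε / (1 + C₀) by positivity)
    filter_upwards [eventually_ge_atTop (1:ℝ), ho] with x hx1 hox
    have hxpos : (0:ℝ) < x := lt_of_lt_of_le one_pos hx1
    set a := x / M with hadef
    have hapos : 0 < a := div_pos hxpos hMpos
    -- splitting the integrals
    have husplit : ∫ y in Ioi (0:ℝ), (κ y {u : ℝ | x < u * y}).toReal ∂G
        = (∫ y in Ioc (0:ℝ) a, (κ y {u : ℝ | x < u * y}).toReal ∂G)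
          + ∫ y in Ioi a, (κ y {u : ℝ | x < u * y}).toReal ∂G := by
      rw [← setIntegral_union Ioc_disjoint_Ioi_same measurableSet_Ioi
        (hfk_int x _) (hfk_int x _), Ioc_union_Ioi_eq_Ioi hapos.le]
    have hvsplit : ∫ y in Ioi (0:ℝ), h y * rvTail X (x / y) ∂G
        = (∫ y in Ioc (0:ℝ) a, h y * rvTail X (x / y) ∂G)
          + ∫ y in Ioi a, h y * rvTail X (x / y) ∂G := by
      rw [← setIntegral_union Ioc_disjoint_Ioi_same measurableSet_Ioi
        (hfH_int x _) (hfH_int x _), Ioc_union_Ioi_eq_Ioi hapos.le]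
    -- a.e. sandwich on (0, x/M]
    have hsand' : ∀ᵐ y ∂(G.restrict (Ioc (0:ℝ) a)),
        (1 - δε) * (h y * rvTail X (x / y)) ≤ (κ y {u : ℝ | x < u * y}).toReal ∧
        (κ y {u : ℝ | x < u * y}).toReal ≤ (1 + δε) * (h y * rvTail X (x / y)) := by
      filter_upwards [ae_restrict_of_ae haesand, ae_restrict_mem measurableSet_Ioc]
        with y hy hymem
      have hy0 : 0 < y := hymem.1
      have hxy : M ≤ x / y := by
        rw [le_div_iff₀ hy0]
        calc M * y ≤ M * a := mul_le_mul_of_nonneg_left hymem.2 hMpos.le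
        _ = x := by rw [hadef, mul_comm, div_mul_cancel₀ _ hMpos.ne']
      have hset : {u : ℝ | x < u * y} = Ioi (x / y) := by
        ext u
        simp only [mem_setOf_eq, mem_Ioi]
        rw [div_lt_iff₀ hy0]
      rw [hset]
      exact hy (x / y) hxy
    -- bounds for the four pieces
    have hLnn : 0 ≤ ∫ y in Ioc (0:ℝ) a, h y * rvTail X (x / y) ∂G := by
      refine setIntegral_nonneg measurableSet_Ioc fun y hy => ?_
      exact mul_nonneg (hhpos y hy.1.le).le (hFnonneg _)
    have hT1le : ∫ y in Ioc (0:ℝ) a, (κ y {u : ℝ | x < u * y}).toReal ∂G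
        ≤ (1 + δε) * ∫ y in Ioc (0:ℝ) a, h y * rvTail X (x / y) ∂G := by
      rw [← integral_const_mul]
      exact integral_mono_ae (hfk_int x _) ((hfH_int x _).const_mul _)
        (hsand'.mono fun y hy => hy.2)
    have hT1ge : (1 - δε) * (∫ y in Ioc (0:ℝ) a, h y * rvTail X (x / y) ∂G)
        ≤ ∫ y in Ioc (0:ℝ) a, (κ y {u : ℝ | x < u * y}).toReal ∂G := by
      rw [← integral_const_mul]
      exact integral_mono_ae ((hfH_int x _).const_mul _) (hfk_int x _)
        (hsand'.mono fun y hy => hy.1)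
    have hT2nn : 0 ≤ ∫ y in Ioi a, (κ y {u : ℝ | x < u * y}).toReal ∂G :=
      setIntegral_nonneg measurableSet_Ioi fun y _ => ENNReal.toReal_nonneg
    have hT2le : ∫ y in Ioi a, (κ y {u : ℝ | x < u * y}).toReal ∂G
        ≤ (G (Ioi a)).toReal := by
      calc ∫ y in Ioi a, (κ y {u : ℝ | x < u * y}).toReal ∂G
          ≤ ∫ _ in Ioi a, (1:ℝ) ∂G := by
            refine integral_mono_ae (hfk_int x _) (integrable_const 1)
              (Eventually.of_forall fun y => ?_)
            exact ENNReal.toReal_le_of_le_ofReal zero_le_one (by simpa using prob_le_one)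
      _ = (G (Ioi a)).toReal := by rw [setIntegral_const]; simp [Measure.real]
    have hRnn : 0 ≤ ∫ y in Ioi a, h y * rvTail X (x / y) ∂G := by
      refine setIntegral_nonneg measurableSet_Ioi fun y hy => ?_
      have hy0 : 0 < y := lt_trans hapos hy
      exact mul_nonneg (hhpos y hy0.le).le (hFnonneg _)
    have hRle : ∫ y in Ioi a, h y * rvTail X (x / y) ∂G ≤ C₀ * (G (Ioi a)).toReal := by
      calc ∫ y in Ioi a, h y * rvTail X (x / y) ∂G
          ≤ ∫ _ in Ioi a, C₀ ∂G := by
            refine integral_mono_ae (hfH_int x _) (integrable_const C₀) ?_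
            filter_upwards [ae_restrict_of_ae hae_nonneg] with y hy0
            calc h y * rvTail X (x/y) ≤ C₀ * 1 :=
                  mul_le_mul (hC₀ y hy0) (hFle1 _) (hFnonneg _) hC₀pos.le
            _ = C₀ := mul_one _
      _ = C₀ * (G (Ioi a)).toReal := by rw [setIntegral_const]; simp [mul_comm, Measure.real]
    -- the tail of Y
    have hW : (G (Ioi a)).toReal = rvTail Y (M⁻¹ * x) := by
      have hseteq : Y ⁻¹' Ioi a = {ω | M⁻¹ * x < Y ω} := by
        ext ω
        simp only [mem_preimage, mem_Ioi, mem_setOf_eq, hadef, div_eq_inv_mul]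
      rw [hGdef, Measure.map_apply hYm measurableSet_Ioi, hseteq, rvTail]
    have hWo : (1 + C₀) * (G (Ioi a)).toReal
        ≤ δε * rvTail (fun ω => X ω * Y ω) x := by
      rw [hW]
      have hnn1 : (0:ℝ) ≤ rvTail Y (M⁻¹ * x) := ENNReal.toReal_nonneg
      have hnn2 : (0:ℝ) ≤ rvTail (fun ω => X ω * Y ω) x := ENNReal.toReal_nonneg
      rw [Real.norm_eq_abs, Real.norm_eq_abs, abs_of_nonneg hnn1, abs_of_nonneg hnn2] at hox
      calc (1 + C₀) * rvTail Y (M⁻¹ * x)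
          ≤ (1 + C₀) * (δε / (1 + C₀) * rvTail (fun ω => X ω * Y ω) x) :=
            mul_le_mul_of_nonneg_left hox (by positivity)
      _ = δε * rvTail (fun ω => X ω * Y ω) x := by
            field_simp
    -- put everything together
    have huid := hu_id x hxpos
    obtain ⟨T1, hT1def⟩ : ∃ t, ∫ y in Ioc (0:ℝ) a, (κ y {u : ℝ | x < u * y}).toReal ∂G = t :=
      ⟨_, rfl⟩
    obtain ⟨T2, hT2def⟩ : ∃ t, ∫ y in Ioi a, (κ y {u : ℝ | x < u * y}).toReal ∂G = t :=
      ⟨_, rfl⟩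
    obtain ⟨L, hLdef⟩ : ∃ t, ∫ y in Ioc (0:ℝ) a, h y * rvTail X (x / y) ∂G = t := ⟨_, rfl⟩
    obtain ⟨R, hRdef⟩ : ∃ t, ∫ y in Ioi a, h y * rvTail X (x / y) ∂G = t := ⟨_, rfl⟩
    obtain ⟨W, hWdef⟩ : ∃ t, (G (Ioi a)).toReal = t := ⟨_, rfl⟩
    obtain ⟨u', hu'def⟩ : ∃ t, rvTail (fun ω => X ω * Y ω) x = t := ⟨_, rfl⟩
    obtain ⟨v', hv'def⟩ : ∃ t, ∫ y in Ioi (0:ℝ), h y * rvTail X (x / y) ∂G = t := ⟨_, rfl⟩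
    have hWnn : 0 ≤ W := hWdef ▸ ENNReal.toReal_nonneg
    rw [hu'def] at huid
    rw [hu'def, hv'def]
    rw [hT1def, hT2def] at husplit
    rw [hv'def, hLdef, hRdef] at hvsplit
    rw [hT1def, hLdef] at hT1le hT1ge
    rw [hT2def, hWdef] at hT2le
    rw [hT2def] at hT2nn
    rw [hRdef, hWdef] at hRle
    rw [hRdef] at hRnn
    rw [hLdef] at hLnn
    rw [hWdef] at hWo
    rw [hu'def] at hWo
    have hvnn : 0 < v' := by rw [← hv'def]; exact hvpos x hxpos
    have hunn : 0 ≤ u' := by rw [← hu'def]; exact ENNReal.toReal_nonneg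
    have hu_eq : u' = T1 + T2 := by rw [huid, husplit]
    exact aux_arith ε δε C₀ u' v' T1 T2 L R W hδεpos hδεhalf hδεε hC₀pos hu_eq hvsplit
      hT1le hT1ge hT2nn hT2le hRnn hRle hLnn hWnn hWo hunn hvnn
  -- conclusion
  have htend : Tendsto (fun x => rvTail (fun ω => X ω * Y ω) x
      / ∫ y in Ioi (0:ℝ), h y * rvTail X (x / y) ∂G) atTop (nhds 1) := by
    rw [Metric.tendsto_nhds]
    intro ε hε
    filter_upwards [hcore (ε/2) (half_pos hε), eventually_gt_atTop (0:ℝ)] with x hx hxpos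
    have hv := hvpos x hxpos
    rw [Real.dist_eq, div_sub_one hv.ne', abs_div, abs_of_pos hv, div_lt_iff₀ hv]
    calc |rvTail (fun ω => X ω * Y ω) x - ∫ y in Ioi (0:ℝ), h y * rvTail X (x / y) ∂G|
        ≤ (ε/2) * ∫ y in Ioi (0:ℝ), h y * rvTail X (x / y) ∂G := hx
    _ < ε * ∫ y in Ioi (0:ℝ), h y * rvTail X (x / y) ∂G := by nlinarith
  exact Asymptotics.isEquivalent_of_tendsto_one htend
end
end

section
/- Let X be a real-valued random variable with unbounded distribution F and Y a nonnegative random variable with distribution G, neither degenerate at zero, and let H be the distribution of XY. Suppose (X,Y) follows an FGM distribution with parameter |θ|<1 and satisfies Assumption 2 (Ḡ(bx)=o(H̄(x)) as x→∞ for every b>0). Then P(XY>x) ~ ∫_0^∞ (1+θ(G(y)+G(y−)−1)) F̄(x/y) G(dy) as x→∞, where G(y−)=lim_{δ→0+} G(y−δ). -/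
open MeasureTheory ProbabilityTheory Filter Set Asymptotics

noncomputable section

open scoped ENNReal

namespace FGMAux

lemma meas_Iic (ν : Measure ℝ) : Measurable fun y => ν (Iic y) :=
  Monotone.measurable (fun _ _ hab => measure_mono (Iic_subset_Iic.2 hab))

lemma meas_Iio (ν : Measure ℝ) : Measurable fun y => ν (Iio y) :=
  Monotone.measurable (fun _ _ hab => measure_mono (Iio_subset_Iio hab))

lemma meas_Ioi (ν : Measure ℝ) : Measurable fun y => ν (Ioi y) :=
  Antitone.measurable (fun _ _ hab => measure_mono (Ioi_subset_Ioi hab))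

/-- the measurable "w" function -/
def wfun (ν : Measure ℝ) (y : ℝ) : ℝ := (ν (Iic y)).toReal + (ν (Iio y)).toReal - 1

lemma meas_wfun (ν : Measure ℝ) : Measurable (wfun ν) := by
  unfold wfun
  exact (((meas_Iic ν).ennreal_toReal).add ((meas_Iio ν).ennreal_toReal)).sub measurable_const

lemma abs_wfun_le (ν : Measure ℝ) [IsProbabilityMeasure ν] (y : ℝ) : |wfun ν y| ≤ 1 := by
  have h1 : ν (Iic y) ≤ 1 := prob_le_one
  have h2 : ν (Iio y) ≤ 1 := prob_le_one
  have h1' : (ν (Iic y)).toReal ≤ 1 := by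
    simpa using ENNReal.toReal_mono (by simp) h1
  have h2' : (ν (Iio y)).toReal ≤ 1 := by
    simpa using ENNReal.toReal_mono (by simp) h2
  have h3 : 0 ≤ (ν (Iic y)).toReal := ENNReal.toReal_nonneg
  have h4 : 0 ≤ (ν (Iio y)).toReal := ENNReal.toReal_nonneg
  rw [abs_le]; constructor <;> simp [wfun] <;> nlinarith


/-- telescoping identity, ennreal version -/
lemma telescope (ν : Measure ℝ) [IsProbabilityMeasure ν] (b : ℝ) :
    ∫⁻ y in Ioi b, (ν (Iic y) + ν (Iio y)) ∂ν = ν (Ioi b) + ν (Ioi b) * ν (Iic b) := by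
  set S1 : Set (ℝ × ℝ) := {p | b < p.1 ∧ p.2 ≤ p.1} with hS1def
  set S2 : Set (ℝ × ℝ) := {p | b < p.1 ∧ p.2 < p.1} with hS2def
  set U : Set (ℝ × ℝ) := {p | b < p.1 ∧ p.1 < p.2} with hUdef
  have mS1 : MeasurableSet S1 :=
    (measurableSet_lt measurable_const measurable_fst).inter
      (measurableSet_le measurable_snd measurable_fst)
  have mS2 : MeasurableSet S2 :=
    (measurableSet_lt measurable_const measurable_fst).inter
      (measurableSet_lt measurable_snd measurable_fst)
  have mU : MeasurableSet U :=
    (measurableSet_lt measurable_const measurable_fst).inter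
      (measurableSet_lt measurable_fst measurable_snd)
  -- prod_apply computations
  have h1 : (ν.prod ν) S1 = ∫⁻ y in Ioi b, ν (Iic y) ∂ν := by
    rw [Measure.prod_apply mS1]
    rw [← lintegral_indicator measurableSet_Ioi]
    congr 1; ext v
    by_cases hv : b < v
    · simp [hS1def, Set.indicator, hv, Set.ext_iff, Iic]
    · simp [hS1def, Set.indicator, hv, Set.ext_iff]
  have h2 : (ν.prod ν) S2 = ∫⁻ y in Ioi b, ν (Iio y) ∂ν := by
    rw [Measure.prod_apply mS2]
    rw [← lintegral_indicator measurableSet_Ioi]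
    congr 1; ext v
    by_cases hv : b < v
    · simp [hS2def, Set.indicator, hv, Set.ext_iff, Iio]
    · simp [hS2def, Set.indicator, hv, Set.ext_iff]
  -- S1 ∪ U = Ioi b ×ˢ univ
  have h3 : (ν.prod ν) S1 + (ν.prod ν) U = ν (Ioi b) := by
    have hdisj : Disjoint S1 U := by
      rw [Set.disjoint_left]
      rintro p ⟨_, h1⟩ ⟨_, h2⟩
      exact absurd h2 (not_lt.2 h1)
    rw [← measure_union hdisj mU]
    have : S1 ∪ U = (Ioi b) ×ˢ (univ : Set ℝ) := by
        ext p; simp only [hS1def, hUdef, mem_union, mem_setOf_eq, mem_prod, mem_Ioi, mem_univ,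
          and_true]
        constructor
        · rintro (⟨h, _⟩ | ⟨h, _⟩) <;> exact h
        · intro h; rcases le_or_gt p.2 p.1 with h' | h'
          · exact Or.inl ⟨h, h'⟩
          · exact Or.inr ⟨h, h'⟩
    rw [this, Measure.prod_prod, measure_univ, mul_one]
  -- S2 = Ioi b ×ˢ Iic b ∪ V with V = swap of U
  have h4 : (ν.prod ν) S2 = ν (Ioi b) * ν (Iic b) + (ν.prod ν) U := by
    have hV : (ν.prod ν) (Prod.swap ⁻¹' U) = (ν.prod ν) U := by
      conv_rhs => rw [← Measure.prod_swap]
      rw [Measure.map_apply measurable_swap mU]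
    have : S2 = (Ioi b) ×ˢ (Iic b) ∪ Prod.swap ⁻¹' U := by
      ext p
      simp only [hS2def, hUdef, mem_union, mem_setOf_eq, mem_prod, mem_Ioi, mem_Iic,
        mem_preimage, Prod.fst_swap, Prod.snd_swap]
      constructor
      · rintro ⟨h1, h2⟩
        rcases le_or_gt p.2 b with h3 | h3
        · exact Or.inl ⟨h1, h3⟩
        · exact Or.inr ⟨h3, h2⟩
      · rintro (⟨h1, h2⟩ | ⟨h1, h2⟩)
        · exact ⟨h1, lt_of_le_of_lt h2 h1⟩
        · exact ⟨lt_trans h1 h2, h2⟩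
    have hdisj2 : Disjoint ((Ioi b) ×ˢ (Iic b)) (Prod.swap ⁻¹' U) := by
      rw [Set.disjoint_left]
      rintro p ⟨_, h1⟩ ⟨h2, _⟩
      exact absurd h2 (not_lt.2 h1)
    rw [this, measure_union hdisj2 (measurable_swap mU), Measure.prod_prod, hV]
  have hadd : ∫⁻ y in Ioi b, (ν (Iic y) + ν (Iio y)) ∂ν
      = (ν.prod ν) S1 + (ν.prod ν) S2 := by
    rw [h1, h2, lintegral_add_left ((meas_Iic ν))]
  have hUne : (ν.prod ν) U ≠ ∞ := (measure_ne_top _ _)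
  have : ∫⁻ y in Ioi b, (ν (Iic y) + ν (Iio y)) ∂ν + (ν.prod ν) U
      = (ν (Ioi b) + ν (Ioi b) * ν (Iic b)) + (ν.prod ν) U := by
    rw [hadd, h4, ← h3]
    ring
  rwa [add_comm _ ((ν.prod ν) U), add_comm _ ((ν.prod ν) U), ENNReal.add_right_inj hUne] at this

/-- bounded measurable functions are integrable on a finite measure (incl. restrictions) -/
lemma integrable_of_bdd {f : ℝ → ℝ} {ν : Measure ℝ} [IsFiniteMeasure ν] (C : ℝ)
    (hm : Measurable f) (hb : ∀ y, |f y| ≤ C) : Integrable f ν :=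
  Integrable.mono' (integrable_const C) hm.aestronglyMeasurable (ae_of_all _ hb)

lemma telescope_real (ν : Measure ℝ) [IsProbabilityMeasure ν] (b : ℝ) :
    ∫ y in Ioi b, wfun ν y ∂ν = (ν (Ioi b)).toReal * (ν (Iic b)).toReal := by
  have key : ∫ y in Ioi b, ((ν (Iic y)).toReal + (ν (Iio y)).toReal) ∂ν
      = (ν (Ioi b)).toReal + (ν (Ioi b)).toReal * (ν (Iic b)).toReal := by
    have hint : Integrable (fun y => (ν (Iic y)).toReal + (ν (Iio y)).toReal) (ν.restrict (Ioi b)) :=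
      integrable_of_bdd 2 ((meas_Iic ν).ennreal_toReal.add (meas_Iio ν).ennreal_toReal)
        (fun y => by
          have h1 : (ν (Iic y)).toReal ≤ 1 := by
            simpa using ENNReal.toReal_mono (by simp) (prob_le_one (μ := ν) (s := Iic y))
          have h2 : (ν (Iio y)).toReal ≤ 1 := by
            simpa using ENNReal.toReal_mono (by simp) (prob_le_one (μ := ν) (s := Iio y))
          have h3 : (0:ℝ) ≤ (ν (Iic y)).toReal := ENNReal.toReal_nonneg
          have h4 : (0:ℝ) ≤ (ν (Iio y)).toReal := ENNReal.toReal_nonneg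
          rw [abs_le]; constructor <;> nlinarith)
    have nn : 0 ≤ᵐ[ν.restrict (Ioi b)] fun y => (ν (Iic y)).toReal + (ν (Iio y)).toReal :=
      ae_of_all _ (fun y => by positivity)
    have := MeasureTheory.ofReal_integral_eq_lintegral_ofReal hint nn
    have hcong : ∫⁻ y in Ioi b, ENNReal.ofReal ((ν (Iic y)).toReal + (ν (Iio y)).toReal) ∂ν
        = ∫⁻ y in Ioi b, (ν (Iic y) + ν (Iio y)) ∂ν := by
      apply lintegral_congr
      intro y
      rw [ENNReal.ofReal_add ENNReal.toReal_nonneg ENNReal.toReal_nonneg,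
        ENNReal.ofReal_toReal (measure_ne_top _ _), ENNReal.ofReal_toReal (measure_ne_top _ _)]
    rw [hcong, telescope ν b] at this
    have h2 := congrArg ENNReal.toReal this
    rw [ENNReal.toReal_ofReal (integral_nonneg_of_ae nn),
      ENNReal.toReal_add (measure_ne_top _ _) (ENNReal.mul_ne_top (measure_ne_top _ _) (measure_ne_top _ _)),
      ENNReal.toReal_mul] at h2
    exact h2
  have hsub : ∫ y in Ioi b, wfun ν y ∂ν
      = (∫ y in Ioi b, ((ν (Iic y)).toReal + (ν (Iio y)).toReal) ∂ν) - ∫ y in Ioi b, (1:ℝ) ∂ν := by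
    rw [← integral_sub]
    · rfl
    · exact integrable_of_bdd 2 ((meas_Iic ν).ennreal_toReal.add (meas_Iio ν).ennreal_toReal)
        (fun y => by
          have h1 : (ν (Iic y)).toReal ≤ 1 := by
            simpa using ENNReal.toReal_mono (by simp) (prob_le_one (μ := ν) (s := Iic y))
          have h2 : (ν (Iio y)).toReal ≤ 1 := by
            simpa using ENNReal.toReal_mono (by simp) (prob_le_one (μ := ν) (s := Iio y))
          have h3 : (0:ℝ) ≤ (ν (Iic y)).toReal := ENNReal.toReal_nonneg
          have h4 : (0:ℝ) ≤ (ν (Iio y)).toReal := ENNReal.toReal_nonneg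
          rw [abs_le]; constructor <;> nlinarith)
    · exact integrable_const 1
  rw [hsub, key]
  rw [setIntegral_const]
  simp only [smul_eq_mul, mul_one, measureReal_def]
  ring

variable {Ω : Type*} [MeasureSpace Ω]

lemma support_compl_null (Z : Ω → ℝ) (hZ : Measurable Z) :
    (Measure.map Z ℙ) ((distSupport Z)ᶜ) = 0 := by
  set ν := Measure.map Z ℙ with hν
  set T : Set (ℚ × ℚ) := {r | ν (Ioo (r.1 : ℝ) (r.2 : ℝ)) = 0} with hT
  have hsub : (distSupport Z)ᶜ ⊆ ⋃ r ∈ T, Ioo (r.1 : ℝ) (r.2 : ℝ) := by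
    intro y hy
    simp only [distSupport, mem_compl_iff, mem_setOf_eq, not_forall] at hy
    obtain ⟨δ, hδ, hzero⟩ := hy
    push_neg at hzero
    have hzero' : ν (Ioo (y - δ) (y + δ)) = 0 := by
      rw [hν, Measure.map_apply hZ measurableSet_Ioo]
      exact le_antisymm (by simpa [Set.preimage] using hzero) (by simp)
    obtain ⟨p, hp1, hp2⟩ := exists_rat_btwn (show y - δ < y by linarith)
    obtain ⟨q, hq1, hq2⟩ := exists_rat_btwn (show y < y + δ by linarith)
    have hpq : ((p, q) : ℚ × ℚ) ∈ T := by
      simp only [hT, mem_setOf_eq]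
      exact measure_mono_null (Ioo_subset_Ioo (le_of_lt hp1) (le_of_lt hq2)) hzero'
    exact mem_biUnion hpq ⟨hp2, hq1⟩
  refine measure_mono_null hsub ?_
  rw [measure_biUnion_null_iff (to_countable T)]
  exact fun r hr => hr

lemma support_rep (Z : Ω → ℝ) (hZ : Measurable Z) (a : ℝ) :
    (Measure.map Z ℙ) (Iic a) = 0 ∨
      ∃ a' ∈ distSupport Z, a' ≤ a ∧ (Measure.map Z ℙ) (Ioc a' a) = 0 := by
  by_cases hne : (distSupport Z ∩ Iic a).Nonempty
  · right
    have hbdd : BddAbove (distSupport Z ∩ Iic a) := ⟨a, fun s hs => hs.2⟩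
    set a' := sSup (distSupport Z ∩ Iic a) with ha'
    have ha'le : a' ≤ a := csSup_le hne (fun s hs => hs.2)
    have ha'mem : a' ∈ distSupport Z := by
      intro δ hδ
      obtain ⟨s, hs, hlt⟩ := exists_lt_of_lt_csSup hne (show a' - δ/2 < a' by linarith)
      have hsle : s ≤ a' := le_csSup hbdd hs
      have := hs.1 (δ/2) (by linarith)
      refine lt_of_lt_of_le this (measure_mono ?_)
      intro ω hω
      simp only [mem_setOf_eq, mem_Ioo] at hω ⊢
      constructor <;> [linarith [hω.1]; linarith [hω.2]]
    refine ⟨a', ha'mem, ha'le, ?_⟩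
    refine measure_mono_null ?_ (support_compl_null Z hZ)
    intro z hz
    simp only [mem_compl_iff]
    intro hzD
    have hmem : z ∈ distSupport Z ∩ Iic a := ⟨hzD, hz.2⟩
    have := le_csSup hbdd hmem
    exact absurd hz.1 (not_lt.2 this)
  · left
    refine measure_mono_null ?_ (support_compl_null Z hZ)
    intro z hz
    simp only [mem_compl_iff]
    intro hzD
    exact hne ⟨z, hzD, hz⟩

/-- one half of the FGM mixture measure -/
def part (μX ν : Measure ℝ) (g : ℝ × ℝ → ℝ) (φ : ℝ → ℝ≥0∞) : Measure (ℝ × ℝ) :=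
  ((((μX.prod μX).prod ν).withDensity fun p => φ p.2).map fun p => (g p.1, p.2))

def fplus (ν : Measure ℝ) (θ : ℝ) (y : ℝ) : ℝ≥0∞ := ENNReal.ofReal ((1 + θ * wfun ν y) / 2)

lemma meas_fplus (ν : Measure ℝ) (θ : ℝ) : Measurable (fplus ν θ) := by
  unfold fplus
  exact ((measurable_const.add (measurable_const.mul (meas_wfun ν))).div_const 2).ennreal_ofReal

/-- the FGM mixture measure -/
def mu2 (μX ν : Measure ℝ) (θ : ℝ) : Measure (ℝ × ℝ) :=
  part μX ν (fun q => max q.1 q.2) (fplus ν θ) +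
    part μX ν (fun q => min q.1 q.2) (fplus ν (-θ))

lemma part_apply (μX ν : Measure ℝ) [SFinite μX] [SFinite ν] {g : ℝ × ℝ → ℝ}
    (hg : Measurable g) {φ : ℝ → ℝ≥0∞} (hφ : Measurable φ) {S : Set (ℝ × ℝ)}
    (hS : MeasurableSet S) :
    part μX ν g φ S = ∫⁻ y, φ y * (μX.prod μX) {q | (g q, y) ∈ S} ∂ν := by
  have hmap : Measurable fun p : (ℝ × ℝ) × ℝ => (g p.1, p.2) :=
    (hg.comp measurable_fst).prodMk measurable_snd
  have hT : MeasurableSet ((fun p : (ℝ × ℝ) × ℝ => (g p.1, p.2)) ⁻¹' S) := hmap hS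
  rw [part, Measure.map_apply hmap hS, withDensity_apply _ hT, ← lintegral_indicator hT]
  have hm : Measurable fun p : (ℝ × ℝ) × ℝ => φ p.2 := hφ.comp measurable_snd
  rw [MeasureTheory.lintegral_prod_symm _ ((hm.indicator hT).aemeasurable)]
  congr 1
  ext y
  have : ∀ q : ℝ × ℝ, ((fun p : (ℝ × ℝ) × ℝ => (g p.1, p.2)) ⁻¹' S).indicator
      (fun p => φ p.2) (q, y) = ({q : ℝ × ℝ | (g q, y) ∈ S}).indicator (fun _ => φ y) q := by
    intro q
    by_cases h : (g q, y) ∈ S <;> simp [Set.indicator, h]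
  have hset : MeasurableSet {q : ℝ × ℝ | (g q, y) ∈ S} :=
    (hg.prodMk measurable_const) hS
  rw [lintegral_congr this, lintegral_indicator_const hset]


lemma kappa_max (μX : Measure ℝ) [IsProbabilityMeasure μX] (a : ℝ) :
    (μX.prod μX) {q : ℝ × ℝ | a < max q.1 q.2} = μX (Ioi a) + μX (Iic a) * μX (Ioi a) := by
  have : {q : ℝ × ℝ | a < max q.1 q.2} = (Ioi a) ×ˢ (univ : Set ℝ) ∪ (Iic a) ×ˢ (Ioi a) := by
    ext q
    simp only [mem_setOf_eq, lt_max_iff, mem_union, mem_prod, mem_Ioi, mem_univ, and_true,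
      mem_Iic]
    rcases le_or_gt q.1 a with h | h
    · simp [h, not_lt.2 h]
    · simp [h]
  rw [this, measure_union, Measure.prod_prod, Measure.prod_prod, measure_univ, mul_one]
  · rw [Set.disjoint_left]
    rintro q hq ⟨h1, _⟩
    exact absurd (mem_Ioi.mp hq.1) (not_lt.2 h1)
  · exact measurableSet_Iic.prod measurableSet_Ioi

lemma kappa_min (μX : Measure ℝ) [IsProbabilityMeasure μX] (a : ℝ) :
    (μX.prod μX) {q : ℝ × ℝ | a < min q.1 q.2} = μX (Ioi a) * μX (Ioi a) := by
  have : {q : ℝ × ℝ | a < min q.1 q.2} = (Ioi a) ×ˢ (Ioi a) := by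
    ext q; simp [lt_min_iff]
  rw [this, Measure.prod_prod]

lemma abs_theta_wfun_le (ν : Measure ℝ) [IsProbabilityMeasure ν] {θ : ℝ} (hθ : |θ| ≤ 1)
    (y : ℝ) : |θ * wfun ν y| ≤ 1 := by
  rw [abs_mul]
  calc |θ| * |wfun ν y| ≤ 1 * 1 :=
        mul_le_mul hθ (abs_wfun_le ν y) (abs_nonneg _) zero_le_one
    _ = 1 := by ring

lemma integrable_affine_wfun (ν : Measure ℝ) [IsProbabilityMeasure ν] {θ : ℝ} (hθ : |θ| ≤ 1)
    (s : Set ℝ) : Integrable (fun y => (1 + θ * wfun ν y) / 2) (ν.restrict s) :=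
  integrable_of_bdd 1 ((measurable_const.add (measurable_const.mul (meas_wfun ν))).div_const 2)
    (fun y => by
      have h := abs_le.mp (abs_theta_wfun_le ν hθ y)
      rw [abs_le]
      constructor <;> [linarith [h.1]; linarith [h.2]])

lemma affine_wfun_nonneg (ν : Measure ℝ) [IsProbabilityMeasure ν] {θ : ℝ} (hθ : |θ| ≤ 1)
    (y : ℝ) : 0 ≤ (1 + θ * wfun ν y) / 2 := by
  have h := abs_le.mp (abs_theta_wfun_le ν hθ y)
  linarith [h.1]

/-- integral of the density against ν on a right ray -/
lemma lint_fplus (ν : Measure ℝ) [IsProbabilityMeasure ν] {θ : ℝ} (hθ : |θ| ≤ 1) (b : ℝ) :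
    ∫⁻ y in Ioi b, fplus ν θ y ∂ν
      = ENNReal.ofReal
          (((ν (Ioi b)).toReal + θ * ((ν (Ioi b)).toReal * (ν (Iic b)).toReal)) / 2) := by
  have h1 : ∫⁻ y in Ioi b, fplus ν θ y ∂ν
      = ENNReal.ofReal (∫ y in Ioi b, (1 + θ * wfun ν y) / 2 ∂ν) :=
    (MeasureTheory.ofReal_integral_eq_lintegral_ofReal (integrable_affine_wfun ν hθ _)
      (ae_of_all _ (affine_wfun_nonneg ν hθ))).symm
  rw [h1]
  congr 1
  have hi : Integrable (fun y => θ * wfun ν y) (ν.restrict (Ioi b)) :=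
    integrable_of_bdd 1 (measurable_const.mul (meas_wfun ν)) (abs_theta_wfun_le ν hθ)
  have : ∫ y in Ioi b, (1 + θ * wfun ν y) / 2 ∂ν
      = ((∫ y in Ioi b, (1:ℝ) ∂ν) + θ * ∫ y in Ioi b, wfun ν y ∂ν) / 2 := by
    rw [← integral_const_mul, ← integral_add (integrable_const 1) hi, ← integral_div]
  rw [this, telescope_real ν b, setIntegral_const]
  simp [smul_eq_mul, measureReal_def]


lemma toReal_Iic_add_Ioi (μ : Measure ℝ) [IsProbabilityMeasure μ] (a : ℝ) :
    (μ (Iic a)).toReal + (μ (Ioi a)).toReal = 1 := by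
  have h : μ (Iic a) + μ (Ioi a) = 1 := by
    rw [← measure_union (Iic_disjoint_Ioi le_rfl) measurableSet_Ioi, Iic_union_Ioi, measure_univ]
  have := congrArg ENNReal.toReal h
  rwa [ENNReal.toReal_add (measure_ne_top _ _) (measure_ne_top _ _), ENNReal.toReal_one] at this

lemma lint_part_rect (μX ν : Measure ℝ) [IsProbabilityMeasure μX] [IsProbabilityMeasure ν]
    {g : ℝ × ℝ → ℝ} (hg : Measurable g) {φ : ℝ → ℝ≥0∞} (hφ : Measurable φ) (a b : ℝ) :
    ∫⁻ y, φ y * (μX.prod μX) {q | (g q, y) ∈ Ioi a ×ˢ Ioi b} ∂ν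
      = (∫⁻ y in Ioi b, φ y ∂ν) * (μX.prod μX) {q | a < g q} := by
  have hpt : ∀ y, φ y * (μX.prod μX) {q | (g q, y) ∈ Ioi a ×ˢ Ioi b}
      = (Ioi b).indicator (fun y => φ y * (μX.prod μX) {q | a < g q}) y := by
    intro y
    by_cases hy : b < y
    · have : {q : ℝ × ℝ | (g q, y) ∈ Ioi a ×ˢ Ioi b} = {q | a < g q} := by
        ext q; simp [hy]
      simp [Set.indicator, hy, this]
    · have : {q : ℝ × ℝ | (g q, y) ∈ Ioi a ×ˢ Ioi b} = ∅ := by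
        ext q; simp [hy]
      simp [Set.indicator, hy, this]
  rw [lintegral_congr hpt, lintegral_indicator measurableSet_Ioi,
    lintegral_mul_const _ hφ]

lemma mu2_rect (μX ν : Measure ℝ) [IsProbabilityMeasure μX] [IsProbabilityMeasure ν] {θ : ℝ}
    (hθ : |θ| ≤ 1) (a b : ℝ) :
    mu2 μX ν θ (Ioi a ×ˢ Ioi b)
      = ENNReal.ofReal ((μX (Ioi a)).toReal * (ν (Ioi b)).toReal
          * (1 + θ * (μX (Iic a)).toReal * (ν (Iic b)).toReal)) := by
  have hrect : MeasurableSet (Ioi a ×ˢ Ioi b) :=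
    measurableSet_Ioi.prod measurableSet_Ioi
  have hmax : Measurable fun q : ℝ × ℝ => max q.1 q.2 := measurable_fst.max measurable_snd
  have hmin : Measurable fun q : ℝ × ℝ => min q.1 q.2 := measurable_fst.min measurable_snd
  have hθ' : |(-θ)| ≤ 1 := by rwa [abs_neg]
  rw [mu2, Measure.add_apply, part_apply _ _ hmax (meas_fplus ν θ) hrect,
    part_apply _ _ hmin (meas_fplus ν (-θ)) hrect,
    lint_part_rect _ _ hmax (meas_fplus ν θ) a b,
    lint_part_rect _ _ hmin (meas_fplus ν (-θ)) a b,
    lint_fplus ν hθ b, lint_fplus ν hθ' b, kappa_max, kappa_min]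
  set Fs := (μX (Ioi a)).toReal with hFs
  set Fb := (μX (Iic a)).toReal with hFb
  set Gs := (ν (Ioi b)).toReal with hGs
  set Gb := (ν (Iic b)).toReal with hGb
  have e1 : μX (Ioi a) = ENNReal.ofReal Fs := (ENNReal.ofReal_toReal (measure_ne_top _ _)).symm
  have e2 : μX (Iic a) = ENNReal.ofReal Fb := (ENNReal.ofReal_toReal (measure_ne_top _ _)).symm
  have hFsum : Fb + Fs = 1 := toReal_Iic_add_Ioi μX a
  have hθθ := abs_le.mp hθ
  have hFs0 : 0 ≤ Fs := ENNReal.toReal_nonneg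
  have hFb0 : 0 ≤ Fb := ENNReal.toReal_nonneg
  have hGs0 : 0 ≤ Gs := ENNReal.toReal_nonneg
  have hGb0 : 0 ≤ Gb := ENNReal.toReal_nonneg
  have hGb1 : Gb ≤ 1 := by
    have := toReal_Iic_add_Ioi ν b; rw [← hGb, ← hGs] at this; linarith
  have hgg : 0 ≤ Gs * Gb := mul_nonneg hGs0 hGb0
  have hg1 : -(Gs * Gb) ≤ θ * (Gs * Gb) := by nlinarith [hθθ.1]
  have hg2 : θ * (Gs * Gb) ≤ Gs * Gb := by nlinarith [hθθ.2]
  have hg3 : Gs * Gb ≤ Gs := by nlinarith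
  have hpos1 : 0 ≤ (Gs + θ * (Gs * Gb)) / 2 := by linarith
  have hpos2 : 0 ≤ (Gs + -θ * (Gs * Gb)) / 2 := by linarith
  rw [e1, e2, ← ENNReal.ofReal_mul hFb0, ← ENNReal.ofReal_add hFs0 (by positivity),
    ← ENNReal.ofReal_mul hpos1, ← ENNReal.ofReal_mul hFs0,
    ← ENNReal.ofReal_mul hpos2, ← ENNReal.ofReal_add (by positivity) (by positivity)]
  congr 1
  have hFs1 : Fs = 1 - Fb := by linarith
  rw [hFs1]; ring

lemma mu2_univ (μX ν : Measure ℝ) [IsProbabilityMeasure μX] [IsProbabilityMeasure ν] {θ : ℝ}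
    (hθ : |θ| ≤ 1) : mu2 μX ν θ univ = 1 := by
  have hmax : Measurable fun q : ℝ × ℝ => max q.1 q.2 := measurable_fst.max measurable_snd
  have hmin : Measurable fun q : ℝ × ℝ => min q.1 q.2 := measurable_fst.min measurable_snd
  rw [mu2, Measure.add_apply, part_apply _ _ hmax (meas_fplus ν θ) MeasurableSet.univ,
    part_apply _ _ hmin (meas_fplus ν (-θ)) MeasurableSet.univ]
  have huniv : ∀ (g : ℝ × ℝ → ℝ) (y : ℝ), {q : ℝ × ℝ | (g q, y) ∈ (univ : Set (ℝ × ℝ))} = univ := by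
    intro g y; ext q; simp
  simp only [huniv, measure_univ, mul_one]
  rw [← lintegral_add_left (meas_fplus ν θ)]
  have hpt : ∀ y, fplus ν θ y + fplus ν (-θ) y = 1 := by
    intro y
    rw [fplus, fplus, ← ENNReal.ofReal_add (affine_wfun_nonneg ν hθ y)
      (affine_wfun_nonneg ν (by rwa [abs_neg]) y),
      show (1 + θ * wfun ν y) / 2 + (1 + -θ * wfun ν y) / 2 = (1:ℝ) by ring,
      ENNReal.ofReal_one]
  rw [lintegral_congr hpt, lintegral_one, measure_univ]

lemma mu2_prod_event (μX ν : Measure ℝ) [IsProbabilityMeasure μX] [IsProbabilityMeasure ν]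
    (θ : ℝ) (hν0 : ν (Iio 0) = 0) {x : ℝ} (hx : 0 < x) :
    mu2 μX ν θ {p : ℝ × ℝ | x < p.1 * p.2}
      = ∫⁻ y in Ioi 0, (fplus ν θ y * (μX (Ioi (x/y)) + μX (Iic (x/y)) * μX (Ioi (x/y)))
          + fplus ν (-θ) y * (μX (Ioi (x/y)) * μX (Ioi (x/y)))) ∂ν := by
  have hS : MeasurableSet {p : ℝ × ℝ | x < p.1 * p.2} :=
    measurableSet_lt measurable_const (measurable_fst.mul measurable_snd)
  have hmax : Measurable fun q : ℝ × ℝ => max q.1 q.2 := measurable_fst.max measurable_snd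
  have hmin : Measurable fun q : ℝ × ℝ => min q.1 q.2 := measurable_fst.min measurable_snd
  have hrestr : ν.restrict (Iic 0) = ν.restrict {0} := by
    apply Measure.restrict_congr_set
    rw [Filter.eventuallyEq_set]
    have : ∀ᵐ z ∂ν, z ∉ Iio 0 := by
      rw [ae_iff]; simp only [not_not]; exact hν0
    filter_upwards [this] with z hz
    simp only [mem_Iic, mem_singleton_iff]
    constructor
    · intro h; rcases eq_or_lt_of_le h with h' | h'
      · exact h'
      · exact absurd h' hz
    · intro h; exact h.le
  have step : ∀ (g : ℝ × ℝ → ℝ) (φ : ℝ → ℝ≥0∞),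
      ∫⁻ y, φ y * (μX.prod μX) {q | (g q, y) ∈ {p : ℝ × ℝ | x < p.1 * p.2}} ∂ν
        = ∫⁻ y in Ioi 0, φ y * (μX.prod μX) {q | x/y < g q} ∂ν := by
    intro g φ
    have hrw : (fun y => φ y * (μX.prod μX) {q : ℝ × ℝ | (g q, y) ∈ {p : ℝ × ℝ | x < p.1 * p.2}})
        = fun y => φ y * (μX.prod μX) {q | x < g q * y} := rfl
    rw [hrw, ← lintegral_add_compl (fun y => φ y * (μX.prod μX) {q | x < g q * y})
      measurableSet_Ioi]
    have hzero : ∫⁻ y in (Ioi (0:ℝ))ᶜ, φ y * (μX.prod μX) {q | x < g q * y} ∂ν = 0 := by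
      rw [compl_Ioi, hrestr, lintegral_singleton]
      have hempty : {q : ℝ × ℝ | x < g q * 0} = ∅ := by
        ext q
        simp only [mem_setOf_eq, mul_zero, mem_empty_iff_false, iff_false]
        exact not_lt.2 hx.le
      rw [hempty, measure_empty, mul_zero, zero_mul]
    rw [hzero, add_zero]
    apply setLIntegral_congr_fun measurableSet_Ioi
    intro y hy
    have hset : {q : ℝ × ℝ | x < g q * y} = {q | x/y < g q} := by
      ext q; exact (div_lt_iff₀ (mem_Ioi.mp hy)).symm
    dsimp only
    rw [hset]
  rw [mu2, Measure.add_apply, part_apply _ _ hmax (meas_fplus ν θ) hS,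
    part_apply _ _ hmin (meas_fplus ν (-θ)) hS, step _ _, step _ _]
  have hc1 : ∫⁻ y in Ioi 0, fplus ν θ y * (μX.prod μX) {q : ℝ × ℝ | x/y < max q.1 q.2} ∂ν
      = ∫⁻ y in Ioi 0, fplus ν θ y * (μX (Ioi (x/y)) + μX (Iic (x/y)) * μX (Ioi (x/y))) ∂ν := by
    apply setLIntegral_congr_fun measurableSet_Ioi
    exact fun y _ => by rw [kappa_max μX (x/y)]
  have hc2 : ∫⁻ y in Ioi 0, fplus ν (-θ) y * (μX.prod μX) {q : ℝ × ℝ | x/y < min q.1 q.2} ∂ν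
      = ∫⁻ y in Ioi 0, fplus ν (-θ) y * (μX (Ioi (x/y)) * μX (Ioi (x/y))) ∂ν := by
    apply setLIntegral_congr_fun measurableSet_Ioi
    exact fun y _ => by rw [kappa_min μX (x/y)]
  rw [hc1, hc2]
  have hdiv : Measurable fun y : ℝ => x / y := measurable_const.div measurable_id
  have hmeas1 : Measurable fun y =>
      fplus ν θ y * (μX (Ioi (x/y)) + μX (Iic (x/y)) * μX (Ioi (x/y))) :=
    (meas_fplus ν θ).mul (((meas_Ioi μX).comp hdiv).add
      (((meas_Iic μX).comp hdiv).mul ((meas_Ioi μX).comp hdiv)))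
  rw [← lintegral_add_left hmeas1]

lemma ext_rect {μ₁ μ₂ : Measure (ℝ × ℝ)} [IsFiniteMeasure μ₁]
    (h : ∀ a b : ℝ, μ₁ (Ioi a ×ˢ Ioi b) = μ₂ (Ioi a ×ˢ Ioi b)) (huniv : μ₁ univ = μ₂ univ) :
    μ₁ = μ₂ := by
  have hspan : IsCountablySpanning (range (Ioi : ℝ → Set ℝ)) := by
    refine ⟨fun n => Ioi (-(n : ℝ)), fun n => mem_range_self _, ?_⟩
    ext z
    simp only [mem_iUnion, mem_Ioi, mem_univ, iff_true]
    obtain ⟨n, hn⟩ := exists_nat_gt (-z)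
    exact ⟨n, by linarith⟩
  have hgen : (inferInstance : MeasurableSpace (ℝ × ℝ)) =
      MeasurableSpace.generateFrom
        (image2 (· ×ˢ ·) (range (Ioi : ℝ → Set ℝ)) (range (Ioi : ℝ → Set ℝ))) := by
    rw [← generateFrom_prod_eq hspan hspan]
    have : (Real.measurableSpace : MeasurableSpace ℝ)
        = MeasurableSpace.generateFrom (range (Ioi : ℝ → Set ℝ)) := by
      rw [← borel_eq_generateFrom_Ioi ℝ]
      exact BorelSpace.measurable_eq
    rw [← this]
  refine MeasureTheory.ext_of_generate_finite _ hgen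
    (isPiSystem_Ioi.prod isPiSystem_Ioi) ?_ huniv
  rintro s ⟨s₁, ⟨a, rfl⟩, t₁, ⟨b, rfl⟩, rfl⟩
  exact h a b

lemma prob_toReal_le_one {α : Type*} [MeasurableSpace α] (μ : Measure α)
    [IsProbabilityMeasure μ] (s : Set α) : (μ s).toReal ≤ 1 := by
  simpa using ENNReal.toReal_mono (by simp) (prob_le_one (μ := μ) (s := s))

lemma meas_tail_div (μX : Measure ℝ) (x : ℝ) :
    Measurable fun y : ℝ => (μX (Ioi (x / y))).toReal :=
  ((meas_Ioi μX).comp (measurable_const.div measurable_id)).ennreal_toReal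

lemma mu2_prod_event_toReal (μX ν : Measure ℝ) [IsProbabilityMeasure μX]
    [IsProbabilityMeasure ν] {θ : ℝ} (hθ : |θ| ≤ 1) (hν0 : ν (Iio 0) = 0) {x : ℝ} (hx : 0 < x) :
    (mu2 μX ν θ {p : ℝ × ℝ | x < p.1 * p.2}).toReal
      = ∫ y in Ioi 0, ((1 + θ * wfun ν y) * (μX (Ioi (x/y))).toReal
          - θ * wfun ν y * (μX (Ioi (x/y))).toReal ^ 2) ∂ν := by
  rw [mu2_prod_event μX ν θ hν0 hx]
  set f : ℝ → ℝ := fun y => (1 + θ * wfun ν y) * (μX (Ioi (x/y))).toReal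
      - θ * wfun ν y * (μX (Ioi (x/y))).toReal ^ 2 with hf
  have hnn : ∀ y, 0 ≤ f y := by
    intro y
    have hc := abs_le.mp (abs_theta_wfun_le ν hθ y)
    set ss := (μX (Ioi (x/y))).toReal with hss
    set c := θ * wfun ν y with hcc
    have hs0 : (0:ℝ) ≤ ss := ENNReal.toReal_nonneg
    have hs1 : ss ≤ 1 := prob_toReal_le_one μX _
    have h1 : (-1 : ℝ) * (1 - ss) ≤ c * (1 - ss) := mul_le_mul_of_nonneg_right hc.1 (by linarith)
    have key : (0:ℝ) ≤ 1 + c * (1 - ss) := by linarith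
    have heq : f y = ss * (1 + c * (1 - ss)) := by simp only [hf]; ring
    rw [heq]
    exact mul_nonneg hs0 key
  have hbd : ∀ y, |f y| ≤ 3 := by
    intro y
    have hc := abs_le.mp (abs_theta_wfun_le ν hθ y)
    have hs0 : (0:ℝ) ≤ (μX (Ioi (x/y))).toReal := ENNReal.toReal_nonneg
    have hs1 : (μX (Ioi (x/y))).toReal ≤ 1 := prob_toReal_le_one μX _
    rw [abs_le]
    constructor <;> simp only [hf] <;> nlinarith [hc.1, hc.2]
  have hmeas : Measurable f := by
    apply Measurable.sub
    · exact (measurable_const.add (measurable_const.mul (meas_wfun ν))).mul (meas_tail_div μX x)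
    · exact (measurable_const.mul (meas_wfun ν)).mul ((meas_tail_div μX x).pow_const 2)
  have hpt : ∀ y, fplus ν θ y * (μX (Ioi (x/y)) + μX (Iic (x/y)) * μX (Ioi (x/y)))
      + fplus ν (-θ) y * (μX (Ioi (x/y)) * μX (Ioi (x/y))) = ENNReal.ofReal (f y) := by
    intro y
    have hc := abs_le.mp (abs_theta_wfun_le ν hθ y)
    set s := (μX (Ioi (x/y))).toReal with hs
    set bb := (μX (Iic (x/y))).toReal with hbb
    have hs0 : (0:ℝ) ≤ s := ENNReal.toReal_nonneg
    have hb0 : (0:ℝ) ≤ bb := ENNReal.toReal_nonneg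
    have e1 : μX (Ioi (x/y)) = ENNReal.ofReal s := (ENNReal.ofReal_toReal (measure_ne_top _ _)).symm
    have e2 : μX (Iic (x/y)) = ENNReal.ofReal bb := (ENNReal.ofReal_toReal (measure_ne_top _ _)).symm
    have hp1 : (0:ℝ) ≤ (1 + θ * wfun ν y) / 2 := by linarith [hc.1]
    have hp2 : (0:ℝ) ≤ (1 + -θ * wfun ν y) / 2 := by linarith [hc.2]
    rw [fplus, fplus, e1, e2, ← ENNReal.ofReal_mul hb0, ← ENNReal.ofReal_add hs0 (by positivity),
      ← ENNReal.ofReal_mul hp1, ← ENNReal.ofReal_mul hs0, ← ENNReal.ofReal_mul hp2,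
      ← ENNReal.ofReal_add (by positivity) (by positivity)]
    congr 1
    have hsum : bb + s = 1 := toReal_Iic_add_Ioi μX (x/y)
    have : bb = 1 - s := by linarith
    simp only [hf, this]
    ring
  rw [lintegral_congr hpt,
    ← MeasureTheory.ofReal_integral_eq_lintegral_ofReal
      (integrable_of_bdd 3 hmeas hbd) (ae_of_all _ hnn),
    ENNReal.toReal_ofReal (integral_nonneg hnn)]


lemma exists_tail_small (μX : Measure ℝ) [IsProbabilityMeasure μX] {η : ℝ} (hη : 0 < η) :
    ∃ M : ℝ, 0 < M ∧ (μX (Ioi M)).toReal ≤ η := by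
  have hmono : Antitone fun n : ℕ => Ioi (n : ℝ) := fun m n hmn =>
    Ioi_subset_Ioi (by exact_mod_cast hmn)
  have hint : (⋂ n : ℕ, Ioi (n : ℝ)) = ∅ := by
    ext z
    simp only [mem_iInter, mem_Ioi, mem_empty_iff_false, iff_false, not_forall, not_lt]
    obtain ⟨n, hn⟩ := exists_nat_gt z
    exact ⟨n, hn.le⟩
  have htend := tendsto_measure_iInter_atTop (μ := μX)
    (fun n => measurableSet_Ioi.nullMeasurableSet) hmono ⟨0, measure_ne_top _ _⟩
  rw [hint, measure_empty] at htend
  have hpos : (0 : ℝ≥0∞) < ENNReal.ofReal η := ENNReal.ofReal_pos.2 hη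
  obtain ⟨n, hn⟩ := (htend.eventually_lt_const hpos).exists
  refine ⟨(n : ℝ) + 1, by positivity, ?_⟩
  have hle : μX (Ioi ((n : ℝ) + 1)) ≤ ENNReal.ofReal η :=
    le_of_lt (lt_of_le_of_lt (measure_mono (Ioi_subset_Ioi (by linarith))) hn)
  exact ENNReal.toReal_le_of_le_ofReal hη.le hle

end FGMAux

theorem product_tail_asymp_of_fgm {Ω : Type*} [MeasureSpace Ω] [IsProbabilityMeasure (ℙ : Measure Ω)]
    (X Y : Ω → ℝ) (hXm : Measurable X) (hYm : Measurable Y)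
    (hYnonneg : ∀ ω, 0 ≤ Y ω)
    (hFunb : UnboundedDist X)
    (hXnd : ℙ {ω | X ω = 0} ≠ 1) (hYnd : ℙ {ω | Y ω = 0} ≠ 1)
    (θ : ℝ) (hθ : |θ| < 1) (hFGM : FGM X Y θ) (hA2 : Assumption2 X Y) :
    (fun x => rvTail (fun ω => X ω * Y ω) x) ~[atTop]
      (fun x => ∫ y in Ioi (0 : ℝ),
        (1 + θ * (rvCdf Y y + rvCdfLeft Y y - 1)) * rvTail X (x / y) ∂(Measure.map Y ℙ)) := by
  classical
  have hθ1 : |θ| ≤ 1 := hθ.le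
  have hθlt : (0:ℝ) < 1 - |θ| := by linarith
  set μX : Measure ℝ := Measure.map X ℙ with hμX
  set ν : Measure ℝ := Measure.map Y ℙ with hνdef
  haveI hPμX : IsProbabilityMeasure μX := Measure.isProbabilityMeasure_map hXm.aemeasurable
  haveI hPν : IsProbabilityMeasure ν := Measure.isProbabilityMeasure_map hYm.aemeasurable
  -- translations between Ω-side and distribution-side quantities
  have hTailX : ∀ t : ℝ, ℙ {ω | t < X ω} = μX (Ioi t) := fun t => by
    rw [hμX, Measure.map_apply hXm measurableSet_Ioi]; rfl
  have hIicX : ∀ t : ℝ, ℙ {ω | X ω ≤ t} = μX (Iic t) := fun t => by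
    rw [hμX, Measure.map_apply hXm measurableSet_Iic]; rfl
  have hTailY : ∀ t : ℝ, ℙ {ω | t < Y ω} = ν (Ioi t) := fun t => by
    rw [hνdef, Measure.map_apply hYm measurableSet_Ioi]; rfl
  have hIicY : ∀ t : ℝ, ℙ {ω | Y ω ≤ t} = ν (Iic t) := fun t => by
    rw [hνdef, Measure.map_apply hYm measurableSet_Iic]; rfl
  have hIioY : ∀ t : ℝ, ℙ {ω | Y ω < t} = ν (Iio t) := fun t => by
    rw [hνdef, Measure.map_apply hYm measurableSet_Iio]; rfl
  have hrvTailX : ∀ t, rvTail X t = (μX (Ioi t)).toReal := fun t => by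
    rw [rvTail, hTailX]
  have hrvTailY : ∀ t, rvTail Y t = (ν (Ioi t)).toReal := fun t => by
    rw [rvTail, hTailY]
  have hrvCdfX : ∀ t, rvCdf X t = (μX (Iic t)).toReal := fun t => by
    rw [rvCdf, hIicX]
  have hrvCdfY : ∀ t, rvCdf Y t = (ν (Iic t)).toReal := fun t => by
    rw [rvCdf, hIicY]
  have hwfun : ∀ y : ℝ, rvCdf Y y + rvCdfLeft Y y - 1 = FGMAux.wfun ν y := fun y => by
    rw [rvCdf, rvCdfLeft, FGMAux.wfun, hIicY, hIioY]
  have hν0 : ν (Iio 0) = 0 := by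
    rw [hνdef, Measure.map_apply hYm measurableSet_Iio]
    have : Y ⁻¹' Iio (0:ℝ) = ∅ := by
      ext ω
      simp only [mem_preimage, mem_Iio, mem_empty_iff_false, iff_false, not_lt]
      exact hYnonneg ω
    rw [this, measure_empty]
  -- measure comparison helper
  have key2 : ∀ s t u v : Set Ω, s ⊆ t → t ⊆ s ∪ u ∪ v → ℙ u = 0 → ℙ v = 0 → ℙ s = ℙ t := by
    intro s t u v h1 h2 hu hv
    refine le_antisymm (measure_mono h1) ?_
    calc ℙ t ≤ ℙ (s ∪ u ∪ v) := measure_mono h2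
      _ ≤ ℙ (s ∪ u) + ℙ v := measure_union_le _ _
      _ ≤ ℙ s + ℙ u + ℙ v := add_le_add (measure_union_le _ _) le_rfl
      _ = ℙ s := by rw [hu, hv, add_zero, add_zero]
  -- the FGM identity extended to all rectangles
  have hrect : ∀ a b : ℝ, ℙ {ω | a < X ω ∧ b < Y ω}
      = ENNReal.ofReal ((μX (Ioi a)).toReal * (ν (Ioi b)).toReal
          * (1 + θ * (μX (Iic a)).toReal * (ν (Iic b)).toReal)) := by
    intro a b
    rcases FGMAux.support_rep Y hYm b with hYb | ⟨b', hb'D, hb'le, hb'null⟩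
    · rw [← hνdef] at hYb
      have hGb0 : (ν (Iic b)).toReal = 0 := by rw [hYb]; simp
      have hGs1 : ν (Ioi b) = 1 := by
        rw [← compl_Iic, prob_compl_eq_one_sub measurableSet_Iic, hYb, tsub_zero]
      have hL : ℙ {ω | a < X ω ∧ b < Y ω} = ℙ {ω | a < X ω} := by
        refine key2 _ _ {ω | Y ω ≤ b} ∅ (fun ω hω => hω.1) ?_ (by rw [hIicY, hYb]) measure_empty
        intro ω hω
        rcases lt_or_ge b (Y ω) with h | h
        · exact Or.inl (Or.inl ⟨hω, h⟩)
        · exact Or.inl (Or.inr h)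
      rw [hL, hTailX a, hGb0, hGs1]
      simp only [ENNReal.toReal_one, one_mul, mul_one, mul_zero, zero_mul, add_zero]
      exact (ENNReal.ofReal_toReal (measure_ne_top μX _)).symm
    · rcases FGMAux.support_rep X hXm a with hXa | ⟨a', ha'D, ha'le, ha'null⟩
      · rw [← hμX] at hXa
        have hFb0 : (μX (Iic a)).toReal = 0 := by rw [hXa]; simp
        have hFs1 : μX (Ioi a) = 1 := by
          rw [← compl_Iic, prob_compl_eq_one_sub measurableSet_Iic, hXa, tsub_zero]
        have hL : ℙ {ω | a < X ω ∧ b < Y ω} = ℙ {ω | b < Y ω} := by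
          refine key2 _ _ {ω | X ω ≤ a} ∅ (fun ω hω => hω.2) ?_ (by rw [hIicX, hXa]) measure_empty
          intro ω hω
          rcases lt_or_ge a (X ω) with h | h
          · exact Or.inl (Or.inl ⟨h, hω⟩)
          · exact Or.inl (Or.inr h)
        rw [hL, hTailY b, hFb0, hFs1]
        simp only [ENNReal.toReal_one, one_mul, mul_one, mul_zero, zero_mul, add_zero]
        exact (ENNReal.ofReal_toReal (measure_ne_top ν _)).symm
      · rw [← hμX] at ha'null
        rw [← hνdef] at hb'null
        have hXocc : ℙ {ω | X ω ∈ Ioc a' a} = 0 := by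
          have : {ω | X ω ∈ Ioc a' a} = X ⁻¹' Ioc a' a := rfl
          rw [this, ← Measure.map_apply hXm measurableSet_Ioc, ← hμX, ha'null]
        have hYocc : ℙ {ω | Y ω ∈ Ioc b' b} = 0 := by
          have : {ω | Y ω ∈ Ioc b' b} = Y ⁻¹' Ioc b' b := rfl
          rw [this, ← Measure.map_apply hYm measurableSet_Ioc, ← hνdef, hb'null]
        have hjointEq : ℙ {ω | a < X ω ∧ b < Y ω} = ℙ {ω | a' < X ω ∧ b' < Y ω} := by
          refine key2 _ _ {ω | X ω ∈ Ioc a' a} {ω | Y ω ∈ Ioc b' b}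
            (fun ω hω => ⟨lt_of_le_of_lt ha'le hω.1, lt_of_le_of_lt hb'le hω.2⟩)
            ?_ hXocc hYocc
          intro ω hω
          rcases le_or_gt (X ω) a with hxa | hxa
          · exact Or.inl (Or.inr ⟨hω.1, hxa⟩)
          · rcases le_or_gt (Y ω) b with hyb | hyb
            · exact Or.inr ⟨hω.2, hyb⟩
            · exact Or.inl (Or.inl ⟨hxa, hyb⟩)
        have htailX : μX (Ioi a') = μX (Ioi a) := by
          refine le_antisymm ?_ (measure_mono (Ioi_subset_Ioi ha'le))
          rw [← Ioc_union_Ioi_eq_Ioi ha'le]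
          calc μX (Ioc a' a ∪ Ioi a) ≤ μX (Ioc a' a) + μX (Ioi a) := measure_union_le _ _
            _ = μX (Ioi a) := by rw [ha'null, zero_add]
        have hcdfX : μX (Iic a) = μX (Iic a') := by
          refine le_antisymm ?_ (measure_mono (Iic_subset_Iic.2 ha'le))
          rw [← Iic_union_Ioc_eq_Iic ha'le]
          calc μX (Iic a' ∪ Ioc a' a) ≤ μX (Iic a') + μX (Ioc a' a) := measure_union_le _ _
            _ = μX (Iic a') := by rw [ha'null, add_zero]
        have htailY : ν (Ioi b') = ν (Ioi b) := by
          refine le_antisymm ?_ (measure_mono (Ioi_subset_Ioi hb'le))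
          rw [← Ioc_union_Ioi_eq_Ioi hb'le]
          calc ν (Ioc b' b ∪ Ioi b) ≤ ν (Ioc b' b) + ν (Ioi b) := measure_union_le _ _
            _ = ν (Ioi b) := by rw [hb'null, zero_add]
        have hcdfY : ν (Iic b) = ν (Iic b') := by
          refine le_antisymm ?_ (measure_mono (Iic_subset_Iic.2 hb'le))
          rw [← Iic_union_Ioc_eq_Iic hb'le]
          calc ν (Iic b' ∪ Ioc b' b) ≤ ν (Iic b') + ν (Ioc b' b) := measure_union_le _ _
            _ = ν (Iic b') := by rw [hb'null, add_zero]
        have hval := hFGM.2 a' ha'D b' hb'D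
        rw [hjointEq, ← ENNReal.ofReal_toReal (measure_ne_top ℙ {ω | a' < X ω ∧ b' < Y ω}),
          hval, hrvTailX, hrvTailY, hrvCdfX, hrvCdfY, htailX, htailY, ← hcdfX, ← hcdfY]
  -- identification of the joint law
  have hpair : Measurable fun ω => (X ω, Y ω) := hXm.prodMk hYm
  haveI : IsProbabilityMeasure (Measure.map (fun ω => (X ω, Y ω)) ℙ) :=
    Measure.isProbabilityMeasure_map hpair.aemeasurable
  have hjoint : Measure.map (fun ω => (X ω, Y ω)) ℙ = FGMAux.mu2 μX ν θ := by
    apply FGMAux.ext_rect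
    · intro a b
      rw [Measure.map_apply hpair (measurableSet_Ioi.prod measurableSet_Ioi)]
      have hpre : (fun ω => (X ω, Y ω)) ⁻¹' (Ioi a ×ˢ Ioi b) = {ω | a < X ω ∧ b < Y ω} := by
        ext ω; simp [Set.mem_prod]
      rw [hpre, hrect a b, FGMAux.mu2_rect μX ν hθ1 a b]
    · rw [FGMAux.mu2_univ μX ν hθ1, measure_univ]
  set w : ℝ → ℝ := FGMAux.wfun ν with hwdef
  -- the exact tail identity
  have hH : ∀ x : ℝ, 0 < x → rvTail (fun ω => X ω * Y ω) x
      = ∫ y in Ioi 0, ((1 + θ * w y) * (μX (Ioi (x/y))).toReal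
          - θ * w y * (μX (Ioi (x/y))).toReal ^ 2) ∂ν := by
    intro x hx
    rw [rvTail]
    have h1 : {ω | x < X ω * Y ω} = (fun ω => (X ω, Y ω)) ⁻¹' {p : ℝ × ℝ | x < p.1 * p.2} := rfl
    rw [h1, ← Measure.map_apply hpair
      (measurableSet_lt measurable_const (measurable_fst.mul measurable_snd) :
        MeasurableSet {p : ℝ × ℝ | x < p.1 * p.2}), hjoint,
      FGMAux.mu2_prod_event_toReal μX ν hθ1 hν0 hx]
  set Hf : ℝ → ℝ := fun x => rvTail (fun ω => X ω * Y ω) x with hHfdef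
  set If : ℝ → ℝ := fun x => ∫ y in Ioi 0, (1 + θ * w y) * (μX (Ioi (x/y))).toReal ∂ν with hIfdef
  set Rf : ℝ → ℝ := fun x => ∫ y in Ioi 0, w y * (μX (Ioi (x/y))).toReal ^ 2 ∂ν with hRfdef
  have hIf_goal : (fun x => ∫ y in Ioi 0,
      (1 + θ * (rvCdf Y y + rvCdfLeft Y y - 1)) * rvTail X (x/y) ∂ν) = If := by
    funext x
    rw [hIfdef]
    congr 1
    funext y
    rw [hwfun y, hrvTailX]
  -- basic facts
  have hwme : Measurable w := FGMAux.meas_wfun ν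
  have habs_w : ∀ y, |w y| ≤ 1 := FGMAux.abs_wfun_le ν
  have habs_θw : ∀ y, |θ * w y| ≤ 1 := fun y => FGMAux.abs_theta_wfun_le ν hθ1 y
  have hFt0 : ∀ t : ℝ, (0:ℝ) ≤ (μX (Ioi t)).toReal := fun t => ENNReal.toReal_nonneg
  have hFt1 : ∀ t : ℝ, (μX (Ioi t)).toReal ≤ 1 := fun t => FGMAux.prob_toReal_le_one μX _
  have hintI : ∀ (x : ℝ) (s : Set ℝ),
      Integrable (fun y => (1 + θ * w y) * (μX (Ioi (x/y))).toReal) (ν.restrict s) := by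
    intro x s
    refine FGMAux.integrable_of_bdd 2
      ((measurable_const.add (measurable_const.mul hwme)).mul (FGMAux.meas_tail_div μX x)) ?_
    intro y
    have h1 := abs_le.mp (habs_θw y)
    have h2 := hFt0 (x/y)
    have h3 := hFt1 (x/y)
    rw [abs_le]
    constructor <;> nlinarith [h1.1, h1.2]
  have hintR : ∀ (x : ℝ) (s : Set ℝ),
      Integrable (fun y => w y * (μX (Ioi (x/y))).toReal ^ 2) (ν.restrict s) := by
    intro x s
    refine FGMAux.integrable_of_bdd 1
      (hwme.mul ((FGMAux.meas_tail_div μX x).pow_const 2)) ?_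
    intro y
    have h1 := abs_le.mp (habs_w y)
    have h2 := hFt0 (x/y)
    have h3 := hFt1 (x/y)
    rw [abs_le]
    constructor <;> nlinarith [h1.1, h1.2]
  have hintF : ∀ (x : ℝ) (s : Set ℝ),
      Integrable (fun y => (μX (Ioi (x/y))).toReal) (ν.restrict s) := by
    intro x s
    refine FGMAux.integrable_of_bdd 1 (FGMAux.meas_tail_div μX x) ?_
    intro y
    rw [abs_of_nonneg (hFt0 (x/y))]
    exact hFt1 (x/y)
  have hintF2 : ∀ (x : ℝ) (s : Set ℝ),
      Integrable (fun y => (μX (Ioi (x/y))).toReal ^ 2) (ν.restrict s) := by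
    intro x s
    refine FGMAux.integrable_of_bdd 1 ((FGMAux.meas_tail_div μX x).pow_const 2) ?_
    intro y
    have h2 := hFt0 (x/y)
    have h3 := hFt1 (x/y)
    rw [abs_of_nonneg (by positivity)]
    nlinarith
  have hHIR : ∀ x : ℝ, 0 < x → Hf x = If x - θ * Rf x := by
    intro x hx
    have hHfx : Hf x = rvTail (fun ω => X ω * Y ω) x := rfl
    rw [hHfx, hH x hx]
    have hre : (fun y => (1 + θ * w y) * (μX (Ioi (x/y))).toReal
        - θ * w y * (μX (Ioi (x/y))).toReal ^ 2)
        = fun y => (1 + θ * w y) * (μX (Ioi (x/y))).toReal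
          - θ * (w y * (μX (Ioi (x/y))).toReal ^ 2) := by
      funext y; ring
    rw [hre, integral_sub (hintI x _) ((hintR x _).const_mul θ), integral_const_mul]
  have hHnonneg : ∀ x : ℝ, 0 ≤ Hf x := fun x => ENNReal.toReal_nonneg
  have hInonneg : ∀ x : ℝ, 0 ≤ If x := by
    intro x
    refine integral_nonneg fun y => mul_nonneg ?_ (hFt0 (x/y))
    have h1 := abs_le.mp (habs_θw y)
    linarith [h1.1]
  have hFle : ∀ x : ℝ, (1 - |θ|) * ∫ y in Ioi 0, (μX (Ioi (x/y))).toReal ∂ν ≤ If x := by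
    intro x
    rw [← integral_const_mul]
    refine integral_mono ((hintF x _).const_mul _) (hintI x _) fun y => ?_
    have h2 := hFt0 (x/y)
    have hmw : |θ * w y| ≤ |θ| := by
      rw [abs_mul]
      exact mul_le_of_le_one_right (abs_nonneg θ) (habs_w y)
    have h1 := abs_le.mp hmw
    have h3 : 1 - |θ| ≤ 1 + θ * w y := by linarith [h1.1]
    exact mul_le_mul_of_nonneg_right h3 h2
  -- the asymptotic estimate
  rw [hIf_goal]
  show ((fun x => Hf x) - If) =o[atTop] If
  have hsub : ((fun x => Hf x) - If) = fun x => Hf x - If x := rfl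
  rw [hsub, Asymptotics.isLittleO_iff]
  intro c hc
  obtain ⟨M, hM, hFM⟩ := FGMAux.exists_tail_small μX (show (0:ℝ) < c * (1 - |θ|)/4 by positivity)
  have hδ : (0:ℝ) < min (c/4) (1/2) := by positivity
  have hA2b := (hA2 (1/M) (by positivity)).def hδ
  filter_upwards [hA2b, eventually_gt_atTop (0:ℝ)] with x hxA hx0
  set cM := x / M with hcMdef
  have hcM0 : 0 < cM := by rw [hcMdef]; positivity
  -- split bound for ∫ F̄²
  have hsplit : ∫ y in Ioi 0, (μX (Ioi (x/y))).toReal ^ 2 ∂ν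
      = (∫ y in Ioc 0 cM, (μX (Ioi (x/y))).toReal ^ 2 ∂ν)
        + ∫ y in Ioi cM, (μX (Ioi (x/y))).toReal ^ 2 ∂ν := by
    rw [← Ioc_union_Ioi_eq_Ioi hcM0.le,
      setIntegral_union (Ioc_disjoint_Ioi le_rfl) measurableSet_Ioi (hintF2 x _) (hintF2 x _)]
  have hb1 : ∫ y in Ioc 0 cM, (μX (Ioi (x/y))).toReal ^ 2 ∂ν
      ≤ (μX (Ioi M)).toReal * ∫ y in Ioi 0, (μX (Ioi (x/y))).toReal ∂ν := by
    calc ∫ y in Ioc 0 cM, (μX (Ioi (x/y))).toReal ^ 2 ∂ν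
        ≤ ∫ y in Ioc 0 cM, (μX (Ioi M)).toReal * (μX (Ioi (x/y))).toReal ∂ν := by
          refine setIntegral_mono_on (hintF2 x _) ((hintF x _).const_mul _)
            measurableSet_Ioc fun y hy => ?_
          have hyM : M ≤ x / y := by
            rw [le_div_iff₀ hy.1]
            have h4 := hy.2
            rw [hcMdef, le_div_iff₀ hM] at h4
            linarith
          have hmono : (μX (Ioi (x/y))).toReal ≤ (μX (Ioi M)).toReal :=
            ENNReal.toReal_mono (measure_ne_top _ _) (measure_mono (Ioi_subset_Ioi hyM))
          have h0 := hFt0 (x/y)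
          nlinarith
      _ ≤ (μX (Ioi M)).toReal * ∫ y in Ioi 0, (μX (Ioi (x/y))).toReal ∂ν := by
          rw [integral_const_mul]
          refine mul_le_mul_of_nonneg_left ?_ ENNReal.toReal_nonneg
          exact setIntegral_mono_set (hintF x _) (ae_of_all _ fun y => hFt0 (x/y))
            (HasSubset.Subset.eventuallyLE Ioc_subset_Ioi_self)
  have hb2 : ∫ y in Ioi cM, (μX (Ioi (x/y))).toReal ^ 2 ∂ν ≤ (ν (Ioi cM)).toReal := by
    calc ∫ y in Ioi cM, (μX (Ioi (x/y))).toReal ^ 2 ∂ν ≤ ∫ _ in Ioi cM, (1:ℝ) ∂ν := by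
          refine setIntegral_mono_on (hintF2 x _) (integrable_const 1)
            measurableSet_Ioi fun y _ => ?_
          have h2 := hFt0 (x/y)
          have h3 := hFt1 (x/y)
          nlinarith
      _ = (ν (Ioi cM)).toReal := by rw [setIntegral_const]; simp [measureReal_def]
  have hRabs : |Rf x| ≤ (μX (Ioi M)).toReal * (∫ y in Ioi 0, (μX (Ioi (x/y))).toReal ∂ν)
      + (ν (Ioi cM)).toReal := by
    have h1 : |Rf x| ≤ ∫ y in Ioi 0, |w y * (μX (Ioi (x/y))).toReal ^ 2| ∂ν := by
      rw [hRfdef]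
      simpa only [Real.norm_eq_abs] using
        norm_integral_le_integral_norm (μ := ν.restrict (Ioi 0))
          (fun y => w y * (μX (Ioi (x/y))).toReal ^ 2)
    have h2 : ∫ y in Ioi 0, |w y * (μX (Ioi (x/y))).toReal ^ 2| ∂ν
        ≤ ∫ y in Ioi 0, (μX (Ioi (x/y))).toReal ^ 2 ∂ν := by
      refine integral_mono (hintR x _).abs (hintF2 x _) fun y => ?_
      rw [abs_mul, abs_of_nonneg (by positivity : (0:ℝ) ≤ (μX (Ioi (x/y))).toReal ^ 2)]
      have h3 := habs_w y
      have h4 : (0:ℝ) ≤ (μX (Ioi (x/y))).toReal ^ 2 := by positivity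
      nlinarith [abs_nonneg (w y)]
    calc |Rf x| ≤ ∫ y in Ioi 0, (μX (Ioi (x/y))).toReal ^ 2 ∂ν := h1.trans h2
      _ = _ + _ := hsplit
      _ ≤ _ := add_le_add hb1 hb2
  -- Assumption 2 bound
  have hT : (ν (Ioi cM)).toReal ≤ min (c/4) (1/2) * Hf x := by
    have he : (1/M) * x = cM := by rw [hcMdef]; field_simp
    rw [hrvTailY, he, Real.norm_eq_abs, Real.norm_eq_abs,
      abs_of_nonneg ENNReal.toReal_nonneg, abs_of_nonneg (hHnonneg x)] at hxA
    exact hxA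
  -- final arithmetic
  have hD : |Hf x - If x| = |θ| * |Rf x| := by
    rw [hHIR x hx0]
    have : If x - θ * Rf x - If x = -(θ * Rf x) := by ring
    rw [this, abs_neg, abs_mul]
  have hθRle : |θ| * |Rf x| ≤ |Rf x| := mul_le_of_le_one_left (abs_nonneg _) hθ1
  have hFint_nonneg : (0:ℝ) ≤ ∫ y in Ioi 0, (μX (Ioi (x/y))).toReal ∂ν :=
    integral_nonneg fun y => hFt0 (x/y)
  have hFMI : (μX (Ioi M)).toReal * (∫ y in Ioi 0, (μX (Ioi (x/y))).toReal ∂ν)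
      ≤ (c/4) * If x := by
    have h5 := hFle x
    have h6 : ∫ y in Ioi 0, (μX (Ioi (x/y))).toReal ∂ν ≤ If x / (1 - |θ|) := by
      rw [le_div_iff₀ hθlt]
      linarith
    calc (μX (Ioi M)).toReal * (∫ y in Ioi 0, (μX (Ioi (x/y))).toReal ∂ν)
        ≤ (c * (1 - |θ|)/4) * (If x / (1 - |θ|)) :=
          mul_le_mul hFM h6 hFint_nonneg (by positivity)
      _ = (c/4) * If x := by field_simp
  have hHle : Hf x ≤ If x + |Hf x - If x| := by
    have := le_abs_self (Hf x - If x); linarith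
  have hD0 : (0:ℝ) ≤ |Hf x - If x| := abs_nonneg _
  have hδc : min (c/4) (1/2) ≤ c/4 := min_le_left _ _
  have hδh : min (c/4) (1/2) ≤ 1/2 := min_le_right _ _
  have step1 : |Hf x - If x| ≤ (c/4) * If x + min (c/4) (1/2) * Hf x := by
    rw [hD]
    calc |θ| * |Rf x| ≤ |Rf x| := hθRle
      _ ≤ (μX (Ioi M)).toReal * (∫ y in Ioi 0, (μX (Ioi (x/y))).toReal ∂ν)
          + (ν (Ioi cM)).toReal := hRabs
      _ ≤ (c/4) * If x + min (c/4) (1/2) * Hf x := add_le_add hFMI hT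
  have step2 : min (c/4) (1/2) * Hf x ≤ min (c/4) (1/2) * (If x + |Hf x - If x|) :=
    mul_le_mul_of_nonneg_left hHle hδ.le
  have step3 : min (c/4) (1/2) * (If x + |Hf x - If x|)
      ≤ (c/4) * If x + (1/2) * |Hf x - If x| := by
    have e1 : min (c/4) (1/2) * If x ≤ (c/4) * If x :=
      mul_le_mul_of_nonneg_right hδc (hInonneg x)
    have e2 : min (c/4) (1/2) * |Hf x - If x| ≤ (1/2) * |Hf x - If x| :=
      mul_le_mul_of_nonneg_right hδh hD0
    calc min (c/4) (1/2) * (If x + |Hf x - If x|)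
        = min (c/4) (1/2) * If x + min (c/4) (1/2) * |Hf x - If x| := by ring
      _ ≤ (c/4) * If x + (1/2) * |Hf x - If x| := add_le_add e1 e2
  rw [Real.norm_eq_abs, Real.norm_eq_abs, abs_of_nonneg (hInonneg x)]
  linarith
end
end
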